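/- arXiv:1910.11837 — 4 statements merged into one kernel-verified Lean document; each statement's English description precedes it below -/
import Mathlib

section
/- Let Q be a chi-squared random variable with K ≥ 3 degrees of freedom. Then for any w > √e, the probability that Q fails to lie in the interval [K/w², Kw²] is at most (√e/w)^K. -/
set_option maxHeartbeats 1000000

open MeasureTheory ProbabilityTheory Real
open scoped ENNReal NNReal


lemma chisq_log3_ub : Real.log 3 ≤ 1.1 := by
  have h : (3:ℝ) ≤ Real.exp 1.1 := by
    have h1 : (2.7182818 : ℝ) ≤ Real.exp 1 := by
      have := Real.exp_one_gt_d9; linarith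
    have h2 : ((3:ℝ))^(10:ℕ) ≤ (Real.exp 1.1)^(10:ℕ) := by
      have he : (Real.exp 1.1)^(10:ℕ) = (Real.exp 1)^(11:ℕ) := by
        rw [← Real.exp_nat_mul, ← Real.exp_nat_mul]; norm_num
      rw [he]
      calc ((3:ℝ))^(10:ℕ) ≤ (2.7182818:ℝ)^(11:ℕ) := by norm_num
        _ ≤ (Real.exp 1)^(11:ℕ) := by gcongr
    exact le_of_pow_le_pow_left₀ (by norm_num) (Real.exp_pos _).le h2
  calc Real.log 3 ≤ Real.log (Real.exp 1.1) := Real.log_le_log (by norm_num) h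
    _ = 1.1 := Real.log_exp _

lemma chisq_log32_lb : (0.405 : ℝ) ≤ Real.log 3 - Real.log 2 := by
  have h : Real.exp 0.405 ≤ 3/2 := by
    have h1 : Real.exp 1 ≤ 2.7182818286 := Real.exp_one_lt_d9.le
    have h3 : (Real.exp 0.405)^(200:ℕ) ≤ ((3:ℝ)/2)^(200:ℕ) := by
      have h2 : (Real.exp 0.405)^(200:ℕ) = (Real.exp 1)^(81:ℕ) := by
        rw [← Real.exp_nat_mul, ← Real.exp_nat_mul]; norm_num
      rw [h2]
      calc (Real.exp 1)^(81:ℕ) ≤ (2.7182818286:ℝ)^(81:ℕ) := by gcongr <;> positivity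
        _ ≤ ((3:ℝ)/2)^(200:ℕ) := by norm_num
    exact le_of_pow_le_pow_left₀ (by norm_num) (by norm_num) h3
  rw [← Real.log_div (by norm_num) (by norm_num)]
  calc (0.405:ℝ) = Real.log (Real.exp 0.405) := (Real.log_exp _).symm
    _ ≤ Real.log (3/2) := Real.log_le_log (Real.exp_pos _) h



lemma chisq_core (K : ℕ) (hK : 3 ≤ K) {x : ℝ} (hx : Real.exp 1 < x) :
    (x * Real.exp (-x/2))^K + Real.exp (-(K:ℝ)/(2*x)) ≤ 1 := by
  have he1 : (2.7182818:ℝ) < Real.exp 1 := by have := Real.exp_one_gt_d9; linarith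
  have he2 : Real.exp 1 < 2.7182819 := by have := Real.exp_one_lt_d9; linarith
  have hx0 : (0:ℝ) < x := lt_trans (by linarith) hx
  have hKR : (3:ℝ) ≤ (K:ℝ) := by exact_mod_cast hK
  have ha0 : 0 ≤ x * Real.exp (-x/2) := by positivity
  rcases le_or_gt x 3 with hx3 | hx3
  · -- e < x ≤ 3
    set e1 := Real.exp 1 with he1def
    have step1 : x * Real.exp (-x/2) ≤ Real.exp ((2 - e1)/2) := by
      refine le_of_pow_le_pow_left₀ (two_ne_zero) (Real.exp_pos _).le ?_
      have hsq : (x * Real.exp (-x/2))^2 = x^2 * Real.exp (-x) := by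
        rw [mul_pow, ← Real.exp_nat_mul]; ring_nf
      have hsq2 : (Real.exp ((2 - e1)/2))^2 = Real.exp (2 - e1) := by
        rw [← Real.exp_nat_mul]; ring_nf
      rw [hsq, hsq2]
      have hkey : x^2 ≤ e1^2 * (1 + (x - e1)) := by
        have h1 : 0 ≤ (x - e1) * (e1*(e1-1) - x) :=
          mul_nonneg (by linarith) (by nlinarith)
        nlinarith
      have h2 : e1^2 * (1 + (x - e1)) ≤ e1^2 * Real.exp (x - e1) := by
        have := Real.add_one_le_exp (x - e1)
        nlinarith [sq_nonneg e1]
      have h3 : e1^2 * Real.exp (x - e1) = Real.exp (2 - e1 + x) := by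
        have : e1^2 = Real.exp 2 := by
          rw [he1def, ← Real.exp_nat_mul]; norm_num
        rw [this, ← Real.exp_add]; ring_nf
      have h4 : x^2 ≤ Real.exp (2 - e1 + x) := by rw [← h3]; linarith
      calc x^2 * Real.exp (-x) ≤ Real.exp (2 - e1 + x) * Real.exp (-x) := by
            gcongr
        _ = Real.exp (2 - e1) := by rw [← Real.exp_add]; ring_nf
    have hb1 : Real.exp ((2 - e1)/2) ≤ 1 := Real.exp_le_one_iff.mpr (by linarith)
    have step2 : (x * Real.exp (-x/2))^K ≤ Real.exp (-1) := by
      calc (x * Real.exp (-x/2))^K ≤ (Real.exp ((2 - e1)/2))^K :=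
            pow_le_pow_left₀ ha0 step1 K
        _ ≤ (Real.exp ((2 - e1)/2))^3 :=
            pow_le_pow_of_le_one (Real.exp_pos _).le hb1 hK
        _ = Real.exp (3*((2 - e1)/2)) := by
            rw [← Real.exp_nat_mul]; norm_num
        _ ≤ Real.exp (-1) := by apply Real.exp_le_exp.mpr; linarith
    have step3 : Real.exp (-(K:ℝ)/(2*x)) ≤ Real.exp (-(1/2)) := by
      apply Real.exp_le_exp.mpr
      rw [neg_div, neg_le_neg_iff, le_div_iff₀ (by linarith)]
      linarith
    have step4 : Real.exp (-1) + Real.exp (-(1/2)) ≤ 1 := by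
      set v := Real.exp (1/2) with hv
      have hv2 : v^2 = e1 := by rw [hv, ← Real.exp_nat_mul]; norm_num; rfl
      have hvpos : 0 < v := Real.exp_pos _
      have hvlb : 1.64 ≤ v := by nlinarith
      have ha : Real.exp (-1) * Real.exp 1 = 1 := by rw [← Real.exp_add]; norm_num
      have hb : Real.exp (-(1/2)) * v = 1 := by rw [hv, ← Real.exp_add]; norm_num
      have hA : Real.exp (-1) ≤ 0.368 := by nlinarith [Real.exp_pos (-1)]
      have hB : Real.exp (-(1/2)) ≤ 0.61 := by nlinarith [Real.exp_pos (-(1/2))]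
      linarith
    linarith
  · -- x ≥ 3
    have hlx0 : 0 < Real.log x := Real.log_pos (by linarith)
    set u := (K:ℝ)/(2*x) with hu
    have hupos : 0 < u := by positivity
    have hKpos : (0:ℝ) < K := by linarith
    have hlogx_ub : Real.log x ≤ 0.1 + x/3 := by
      have h1 : Real.log (x/3) ≤ x/3 - 1 := Real.log_le_sub_one_of_pos (by positivity)
      have h2 : Real.log (x/3) = Real.log x - Real.log 3 :=
        Real.log_div (by positivity) (by norm_num)
      have := chisq_log3_ub
      linarith
    have key : (x * Real.exp (-x/2))^K ≤ u * Real.exp (-u) := by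
      have hL : (x * Real.exp (-x/2))^K = Real.exp ((K:ℝ) * (Real.log x - x/2)) := by
        have : x * Real.exp (-x/2) = Real.exp (Real.log x - x/2) := by
          rw [Real.exp_sub, Real.exp_log hx0, neg_div, Real.exp_neg]; ring
        rw [this, ← Real.exp_nat_mul]
      have hR : u * Real.exp (-u) = Real.exp (Real.log (K:ℝ) - Real.log (2*x) - u) := by
        rw [Real.exp_sub, Real.exp_sub, Real.exp_log hKpos, Real.exp_log (by positivity),
          Real.exp_neg, hu]
        field_simp
      rw [hL, hR]
      apply Real.exp_le_exp.mpr
      have hlog2x : Real.log (2*x) = Real.log 2 + Real.log x :=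
        Real.log_mul (by norm_num) (by positivity)
      have hlogK : Real.log 3 ≤ Real.log (K:ℝ) := Real.log_le_log (by norm_num) hKR
      have hc : Real.log x - x/2 + 1/(2*x) ≤ 0 := by
        have h6 : 1/(2*x) ≤ 1/6 := by
          rw [div_le_div_iff₀ (by linarith) (by norm_num)]; linarith
        linarith
      have hKc : (K:ℝ) * (Real.log x - x/2 + 1/(2*x)) ≤
          3 * (Real.log x - x/2 + 1/(2*x)) :=
        mul_le_mul_of_nonpos_right hKR hc
      have h32 := chisq_log32_lb
      have h6 : 3*(1/(2*x)) ≤ 1/2 := by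
        rw [mul_one_div, div_le_div_iff₀ (by linarith) (by norm_num)]; linarith
      have hx6 : 1/2 ≤ x/6 := by linarith
      have hinv : (K:ℝ) * (1/(2*x)) = u := by rw [hu]; ring
      have hfinal : 3*(Real.log x - x/2 + 1/(2*x)) + Real.log 2 + Real.log x
          - Real.log (K:ℝ) ≤ 0 := by linarith
      linarith [hKc, hfinal, hlog2x, hinv]
    have fin : u * Real.exp (-u) + Real.exp (-u) ≤ 1 := by
      have h1 := Real.add_one_le_exp u
      have h2 : Real.exp (-u) * Real.exp u = 1 := by rw [← Real.exp_add]; simp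
      nlinarith [Real.exp_pos (-u), Real.exp_pos u]
    have : Real.exp (-(K:ℝ)/(2*x)) = Real.exp (-u) := by rw [hu, neg_div]
    rw [this]
    linarith

lemma chisq_pdf_mul {t x : ℝ} :
    gaussianPDFReal 0 1 x * Real.exp (t * x^2)
      = (Real.sqrt (2*π))⁻¹ * Real.exp (-(1/2 - t) * x^2) := by
  rw [gaussianPDFReal]
  push_cast
  rw [mul_assoc, ← Real.exp_add]
  ring_nf

lemma chisq_integrable {t : ℝ} (ht : t < 1/2) :
    Integrable (fun x => Real.exp (t * x^2)) (gaussianReal 0 1) := by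
  rw [gaussianReal_of_var_ne_zero _ one_ne_zero]
  have hpdf : gaussianPDF 0 1 = fun x => ((Real.toNNReal (gaussianPDFReal 0 1 x)) : ℝ≥0∞) := rfl
  rw [hpdf, integrable_withDensity_iff_integrable_smul
    ((measurable_gaussianPDFReal 0 1).real_toNNReal)]
  have : (fun x => (Real.toNNReal (gaussianPDFReal 0 1 x)) • Real.exp (t * x^2))
      = fun x => (Real.sqrt (2*π))⁻¹ * Real.exp (-(1/2 - t) * x^2) := by
    funext x
    rw [NNReal.smul_def, Real.coe_toNNReal _ (gaussianPDFReal_nonneg 0 1 x)]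
    exact chisq_pdf_mul
  rw [this]
  exact (integrable_exp_neg_mul_sq (by linarith)).const_mul _

lemma chisq_integral {t : ℝ} (ht : t < 1/2) :
    ∫ x, Real.exp (t * x^2) ∂(gaussianReal 0 1) = 1 / Real.sqrt (1 - 2*t) := by
  rw [gaussianReal_of_var_ne_zero _ one_ne_zero]
  have hpdf : gaussianPDF 0 1 = fun x => ((Real.toNNReal (gaussianPDFReal 0 1 x)) : ℝ≥0∞) := rfl
  rw [hpdf, integral_withDensity_eq_integral_smul
    ((measurable_gaussianPDFReal 0 1).real_toNNReal)]
  have h1 : (fun x => (Real.toNNReal (gaussianPDFReal 0 1 x)) • Real.exp (t * x^2))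
      = fun x => (Real.sqrt (2*π))⁻¹ * Real.exp (-(1/2 - t) * x^2) := by
    funext x
    rw [NNReal.smul_def, Real.coe_toNNReal _ (gaussianPDFReal_nonneg 0 1 x)]
    exact chisq_pdf_mul
  rw [h1, integral_const_mul, integral_gaussian]
  rw [← Real.sqrt_inv, ← Real.sqrt_mul (by positivity)]
  rw [show (2*π)⁻¹ * (π/(1/2 - t)) = (1 - 2*t)⁻¹ by
    have hpi : π ≠ 0 := pi_ne_zero
    have h1 : (1:ℝ)/2 - t ≠ 0 := by intro h; rw [sub_eq_zero] at h; linarith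
    have h2 : (1:ℝ) - 2*t ≠ 0 := by intro h; rw [sub_eq_zero] at h; linarith
    field_simp]
  rw [Real.sqrt_inv, one_div]
lemma chisq_analytic (K : ℕ) (hK : 3 ≤ K) {w : ℝ} (hw : Real.exp (1/2) < w) :
    (w * Real.exp ((1 - w^2)/2))^K + (Real.exp ((w^2 - 1)/(2*w^2)) / w)^K
      ≤ (Real.exp (1/2) / w)^K := by
  have hw0 : 0 < w := lt_trans (Real.exp_pos _) hw
  have hee : Real.exp (1/2) * Real.exp (1/2) = Real.exp 1 := by
    rw [← Real.exp_add]; norm_num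
  have hx : Real.exp 1 < w^2 := by nlinarith [Real.exp_pos (1/2)]
  have hA : w * Real.exp ((1 - w^2)/2)
      = (Real.exp (1/2)/w) * (w^2 * Real.exp (-w^2/2)) := by
    rw [show (1 - w^2)/2 = 1/2 + -w^2/2 by ring, Real.exp_add]
    field_simp
  have hB : Real.exp ((w^2 - 1)/(2*w^2)) / w
      = (Real.exp (1/2)/w) * Real.exp (-(1/(2*w^2))) := by
    rw [show (w^2 - 1)/(2*w^2) = 1/2 + -(1/(2*w^2)) by field_simp; ring, Real.exp_add]
    ring
  rw [hA, hB]
  have hcore := chisq_core K hK hx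
  have hexp : (Real.exp (-(1/(2*w^2))))^K = Real.exp (-(K:ℝ)/(2*w^2)) := by
    rw [← Real.exp_nat_mul]
    congr 1
    push_cast
    ring
  calc (Real.exp (1/2)/w * (w^2 * Real.exp (-w^2/2)))^K
        + (Real.exp (1/2)/w * Real.exp (-(1/(2*w^2))))^K
      = (Real.exp (1/2)/w)^K
          * ((w^2 * Real.exp (-w^2/2))^K + (Real.exp (-(1/(2*w^2))))^K) := by
        rw [mul_pow, mul_pow]; ring
    _ ≤ (Real.exp (1/2)/w)^K * 1 := by
        apply mul_le_mul_of_nonneg_left _ (by positivity)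
        rw [hexp]
        exact hcore
    _ = (Real.exp (1/2)/w)^K := mul_one _

lemma chisq_mgf {Ω : Type*} [MeasurableSpace Ω] (Pr : Measure Ω) [IsProbabilityMeasure Pr]
    (X : Ω → ℝ) (hm : Measurable X) (hg : Measure.map X Pr = gaussianReal 0 1)
    {t : ℝ} (ht : t < 1/2) :
    mgf (fun ω => X ω ^ 2) Pr t = 1 / Real.sqrt (1 - 2*t) := by
  have hgm : Measurable fun x : ℝ => Real.exp (t * x^2) :=
    Real.measurable_exp.comp ((measurable_id.pow_const 2).const_mul t)
  have h1 : ∫ x, Real.exp (t * x^2) ∂(Measure.map X Pr)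
      = ∫ ω, Real.exp (t * (X ω)^2) ∂Pr :=
    integral_map hm.aemeasurable hgm.aestronglyMeasurable
  rw [hg, chisq_integral ht] at h1
  exact h1.symm

lemma chisq_int {Ω : Type*} [MeasurableSpace Ω] (Pr : Measure Ω) [IsProbabilityMeasure Pr]
    (X : Ω → ℝ) (hm : Measurable X) (hg : Measure.map X Pr = gaussianReal 0 1)
    {t : ℝ} (ht : t < 1/2) :
    Integrable (fun ω => Real.exp (t * X ω ^ 2)) Pr := by
  have hgm : Measurable fun x : ℝ => Real.exp (t * x^2) :=
    Real.measurable_exp.comp ((measurable_id.pow_const 2).const_mul t)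
  have h := chisq_integrable ht
  rw [← hg] at h
  exact (integrable_map_measure hgm.aestronglyMeasurable hm.aemeasurable).mp h


/-- Chi-squared tail bound: for Q ~ χ²(K) (sum of squares of K iid standard normals),
K ≥ 3, and any w > √e, the probability that Q ∉ [K/w², Kw²] is at most (√e/w)^K. -/
theorem stmt0 {Ω : Type*} [MeasurableSpace Ω] (Pr : Measure Ω) [IsProbabilityMeasure Pr]
    (K : ℕ) (hK : 3 ≤ K)
    (X : Fin K → Ω → ℝ)
    (hmeas : ∀ i, Measurable (X i))
    (hindep : iIndepFun X Pr)
    (hgauss : ∀ i, Measure.map (X i) Pr = gaussianReal 0 1)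
    (Q : Ω → ℝ) (hQ : ∀ ω, Q ω = ∑ i, (X i ω) ^ 2)
    (w : ℝ) (hw : Real.sqrt (Real.exp 1) < w) :
    Pr {ω | ¬ ((K : ℝ) / w ^ 2 ≤ Q ω ∧ Q ω ≤ (K : ℝ) * w ^ 2)}
      ≤ ENNReal.ofReal ((Real.sqrt (Real.exp 1) / w) ^ K) := by
  have hsqrt : Real.sqrt (Real.exp 1) = Real.exp (1/2) := by
    rw [show Real.exp 1 = Real.exp (1/2) * Real.exp (1/2) by rw [← Real.exp_add]; norm_num]
    exact Real.sqrt_mul_self (Real.exp_pos _).le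
  rw [hsqrt] at hw ⊢
  have hw0 : 0 < w := lt_trans (Real.exp_pos _) hw
  have hw1 : 1 < w := lt_of_le_of_lt (by nlinarith [Real.add_one_le_exp (1/2:ℝ)]) hw
  have hx1 : (1:ℝ) < w^2 := by nlinarith
  -- the squared variables
  have hYindep : iIndepFun (fun i ω => X i ω ^ 2) Pr :=
    hindep.comp (fun _ x => x ^ 2) (fun _ => measurable_id.pow_const 2)
  have hYmeas : ∀ i, Measurable (fun ω => X i ω ^ 2) := fun i => (hmeas i).pow_const 2
  have hQfun : Q = ∑ i, (fun ω => X i ω ^ 2) := by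
    funext ω
    rw [hQ ω, Finset.sum_apply]
  have hintQ : ∀ t : ℝ, t < 1/2 → Integrable (fun ω => Real.exp (t * Q ω)) Pr := by
    intro t ht
    have h := hYindep.integrable_exp_mul_sum (t := t) (s := Finset.univ) hYmeas
      (fun i _ => chisq_int Pr (X i) (hmeas i) (hgauss i) ht)
    apply h.congr
    filter_upwards with ω
    rw [Finset.sum_apply, ← hQ ω]
  have hmgfQ : ∀ t : ℝ, t < 1/2 → mgf Q Pr t = (1 / Real.sqrt (1 - 2*t))^K := by
    intro t ht
    rw [hQfun, hYindep.mgf_sum hYmeas Finset.univ,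
      Finset.prod_congr rfl (fun i _ => chisq_mgf Pr (X i) (hmeas i) (hgauss i) ht),
      Finset.prod_const, Finset.card_univ, Fintype.card_fin]
  -- upper tail
  have ht1a : (0:ℝ) ≤ (w^2 - 1)/(2*w^2) := div_nonneg (by nlinarith) (by positivity)
  have ht1b : (w^2 - 1)/(2*w^2) < 1/2 := by
    rw [div_lt_iff₀ (by positivity)]
    nlinarith
  have hup : Pr {ω | (K:ℝ) * w^2 ≤ Q ω}
      ≤ ENNReal.ofReal ((w * Real.exp ((1 - w^2)/2))^K) := by
    rw [ENNReal.le_ofReal_iff_toReal_le (measure_ne_top _ _) (by positivity)]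
    calc (Pr {ω | (K:ℝ) * w^2 ≤ Q ω}).toReal
        ≤ Real.exp (-((w^2 - 1)/(2*w^2)) * ((K:ℝ) * w^2)) * mgf Q Pr ((w^2 - 1)/(2*w^2)) :=
          measure_ge_le_exp_mul_mgf ((K:ℝ) * w^2) ht1a (hintQ _ ht1b)
      _ = (w * Real.exp ((1 - w^2)/2))^K := by
          rw [hmgfQ _ ht1b]
          rw [show 1 - 2*((w^2 - 1)/(2*w^2)) = 1/w^2 by field_simp; ring]
          rw [show Real.sqrt (1/w^2) = 1/w by
            rw [one_div, one_div, Real.sqrt_inv, Real.sqrt_sq hw0.le]]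
          rw [one_div_one_div]
          rw [show -((w^2 - 1)/(2*w^2)) * ((K:ℝ) * w^2) = (K:ℕ) * ((1 - w^2)/2) by
            field_simp; ring]
          rw [Real.exp_nat_mul, ← mul_pow]
          ring
  -- lower tail
  have ht2a : (1 - w^2)/2 ≤ 0 := by nlinarith
  have ht2b : (1 - w^2)/2 < 1/2 := by nlinarith
  have hlow : Pr {ω | Q ω ≤ (K:ℝ) / w^2}
      ≤ ENNReal.ofReal ((Real.exp ((w^2 - 1)/(2*w^2)) / w)^K) := by
    rw [ENNReal.le_ofReal_iff_toReal_le (measure_ne_top _ _) (by positivity)]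
    calc (Pr {ω | Q ω ≤ (K:ℝ) / w^2}).toReal
        ≤ Real.exp (-((1 - w^2)/2) * ((K:ℝ) / w^2)) * mgf Q Pr ((1 - w^2)/2) :=
          measure_le_le_exp_mul_mgf ((K:ℝ) / w^2) ht2a (hintQ _ ht2b)
      _ = (Real.exp ((w^2 - 1)/(2*w^2)) / w)^K := by
          rw [hmgfQ _ ht2b]
          rw [show 1 - 2*((1 - w^2)/2) = w^2 by ring]
          rw [Real.sqrt_sq hw0.le]
          rw [show -((1 - w^2)/2) * ((K:ℝ) / w^2) = (K:ℕ) * ((w^2 - 1)/(2*w^2)) by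
            field_simp; ring]
          rw [Real.exp_nat_mul, ← mul_pow, mul_one_div]
  -- assemble
  have hsub : {ω | ¬ ((K:ℝ)/w^2 ≤ Q ω ∧ Q ω ≤ (K:ℝ)*w^2)}
      ⊆ {ω | Q ω ≤ (K:ℝ)/w^2} ∪ {ω | (K:ℝ)*w^2 ≤ Q ω} := by
    intro ω hω
    simp only [Set.mem_setOf_eq, not_and_or, not_le] at hω
    rcases hω with h | h
    · exact Or.inl (le_of_lt h)
    · exact Or.inr (le_of_lt h)
  calc Pr {ω | ¬ ((K:ℝ)/w^2 ≤ Q ω ∧ Q ω ≤ (K:ℝ)*w^2)}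
      ≤ Pr ({ω | Q ω ≤ (K:ℝ)/w^2} ∪ {ω | (K:ℝ)*w^2 ≤ Q ω}) := measure_mono hsub
    _ ≤ Pr {ω | Q ω ≤ (K:ℝ)/w^2} + Pr {ω | (K:ℝ)*w^2 ≤ Q ω} := measure_union_le _ _
    _ ≤ ENNReal.ofReal ((Real.exp ((w^2 - 1)/(2*w^2))/w)^K)
        + ENNReal.ofReal ((w * Real.exp ((1 - w^2)/2))^K) := add_le_add hlow hup
    _ = ENNReal.ofReal ((w * Real.exp ((1 - w^2)/2))^K
        + (Real.exp ((w^2 - 1)/(2*w^2))/w)^K) := by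
        rw [← ENNReal.ofReal_add (by positivity) (by positivity), add_comm]
    _ ≤ ENNReal.ofReal ((Real.exp (1/2)/w)^K) :=
        ENNReal.ofReal_le_ofReal (chisq_analytic K hK hw)
end

section
/- Let Φ ∈ ℝ^{K×N} be a random matrix whose i-th row is (1/√K)Zᵢᵀ with Z₁,…,Z_K independent N(0,Σ) Gaussian vectors, K ≥ 3. Then for any fixed v ∈ ℝ^N and any w > √e, with probability at least 1 − (√e/w)^K one has w⁻¹‖v‖_Σ ≤ ‖Φv‖₂ ≤ w‖v‖_Σ. -/
open MeasureTheory ProbabilityTheory Real Matrix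
open scoped NNReal ENNReal

lemma poly_ineq (u : ℝ) (hu : 2.718 ≤ u) :
    8*u^5 ≤ (12*u-9)*(1+u/2+u^2/8+u^3/48+u^4/384)^3 := by
  have h : (0:ℝ) ≤ u - 2.718 := by linarith
  nlinarith [pow_nonneg h 2, pow_nonneg h 3, pow_nonneg h 4, pow_nonneg h 5,
    pow_nonneg h 6, pow_nonneg h 7, pow_nonneg h 8, pow_nonneg h 9,
    pow_nonneg h 10, pow_nonneg h 11, pow_nonneg h 12, pow_nonneg h 13]

lemma core_ineq (u : ℝ) (hu : Real.exp 1 < u) (K : ℕ) (hK : 3 ≤ K) :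
    Real.exp (-(K:ℝ)/(2*u)) + (u * Real.exp (-u/2))^K ≤ 1 := by
  have he : (2.718:ℝ) < Real.exp 1 := by
    have := Real.exp_one_gt_d9; norm_num at this ⊢; linarith
  have hu' : (2.718:ℝ) ≤ u := by linarith
  have hu0 : (0:ℝ) < u := by linarith
  -- A < 1
  have hq : 1 + u/2 + (u/2)^2/2 ≤ Real.exp (u/2) :=
    Real.quadratic_le_exp_of_nonneg (by linarith)
  have hA1 : u * Real.exp (-u/2) < 1 := by
    have h1 : u < Real.exp (u/2) := by nlinarith
    have h2 : Real.exp (-u/2) * Real.exp (u/2) = 1 := by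
      rw [← Real.exp_add]; ring_nf; exact Real.exp_zero
    nlinarith [Real.exp_pos (-u/2), Real.exp_pos (u/2)]
  have hA0 : 0 < u * Real.exp (-u/2) := by positivity
  have hAK : (u * Real.exp (-u/2))^K ≤ (u * Real.exp (-u/2))^3 :=
    pow_le_pow_of_le_one hA0.le hA1.le hK
  have hexpK : Real.exp (-(K:ℝ)/(2*u)) ≤ Real.exp (-3/(2*u)) := by
    apply Real.exp_le_exp.2
    have : (3:ℝ) ≤ (K:ℝ) := by exact_mod_cast hK
    rw [div_le_div_iff₀ (by linarith) (by linarith)]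
    nlinarith
  -- exp(-x) ≤ 1 - x + x^2/2 for x = 3/(2u)
  set x : ℝ := 3/(2*u) with hxdef
  have hx0 : 0 < x := by positivity
  have hqx : 1 + x + x^2/2 ≤ Real.exp x := Real.quadratic_le_exp_of_nonneg hx0.le
  have hprod : Real.exp (-x) * Real.exp x = 1 := by rw [← Real.exp_add]; ring_nf; exact Real.exp_zero
  have hexpx : Real.exp (-x) ≤ 1 - x + x^2/2 := by
    nlinarith [Real.exp_pos (-x), Real.exp_pos x, sq_nonneg x, sq_nonneg (x^2),
      mul_le_mul_of_nonneg_left hqx (Real.exp_pos (-x)).le]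
  -- A^3 ≤ x - x^2/2
  have htaylor : 1+u/2+u^2/8+u^3/48+u^4/384 ≤ Real.exp (u/2) := by
    have := Real.sum_le_exp_of_nonneg (x := u/2) (by linarith) 5
    simp [Finset.sum_range_succ, Nat.factorial] at this
    convert this using 1
    ring
  have hqpos : (0:ℝ) < 1+u/2+u^2/8+u^3/48+u^4/384 := by positivity
  have hE : 8*u^5 ≤ (12*u-9) * Real.exp (3*(u/2)) := by
    calc 8*u^5 ≤ (12*u-9)*(1+u/2+u^2/8+u^3/48+u^4/384)^3 := poly_ineq u hu'
    _ ≤ (12*u-9) * Real.exp (u/2)^3 := by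
        apply mul_le_mul_of_nonneg_left _ (by linarith)
        exact pow_le_pow_left₀ hqpos.le htaylor 3
    _ = (12*u-9) * Real.exp (3*(u/2)) := by
        rw [← Real.exp_nat_mul]; norm_num
  have hA3 : (u * Real.exp (-u/2))^3 ≤ x - x^2/2 := by
    have hexp3 : Real.exp (-u/2)^3 = Real.exp (3*(-u/2)) := by
      rw [← Real.exp_nat_mul]; norm_num
    have hinv : Real.exp (3*(-u/2)) * Real.exp (3*(u/2)) = 1 := by
      rw [← Real.exp_add]; ring_nf; exact Real.exp_zero
    have hxval : x - x^2/2 = (12*u-9)/(8*u^2) := by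
      rw [hxdef]; field_simp; ring
    rw [hxval, mul_pow, hexp3, le_div_iff₀ (by positivity)]
    have := mul_le_mul_of_nonneg_left hE (Real.exp_pos (3*(-u/2))).le
    nlinarith [Real.exp_pos (3*(-u/2)), Real.exp_pos (3*(u/2))]
  have hxeq : Real.exp (-3/(2*u)) = Real.exp (-x) := by rw [hxdef]; ring_nf
  calc Real.exp (-(K:ℝ)/(2*u)) + (u * Real.exp (-u/2))^K
      ≤ Real.exp (-x) + (x - x^2/2) := by rw [← hxeq]; linarith
    _ ≤ 1 := by linarith

lemma gauss_exp_sq (c : ℝ) (hc : 0 < c) (t : ℝ) (ht : 2*t*c < 1) :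
    Integrable (fun x => Real.exp (t * x^2)) (gaussianReal 0 c.toNNReal) ∧
    ∫ x, Real.exp (t * x^2) ∂(gaussianReal 0 c.toNNReal)
      = (Real.sqrt (1 - 2*t*c))⁻¹ := by
  have hc' : ((c.toNNReal : ℝ≥0) : ℝ) = c := Real.coe_toNNReal c hc.le
  have hvne : c.toNNReal ≠ 0 := by
    simp only [ne_eq, Real.toNNReal_eq_zero, not_le]; exact hc
  set b : ℝ := (1 - 2*t*c)/(2*c) with hbdef
  have hb : 0 < b := by apply div_pos <;> linarith
  have hfun : (fun x => Real.exp (t * x^2) * gaussianPDFReal 0 c.toNNReal x)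
      = fun x => (Real.sqrt (2*π*c))⁻¹ * Real.exp (-b * x^2) := by
    ext x
    rw [gaussianPDFReal, hc', sub_zero, mul_comm (Real.exp _), mul_assoc, ← Real.exp_add]
    congr 2
    rw [hbdef]
    field_simp [hc.ne']
    ring
  have hint : Integrable (fun x => Real.exp (t * x^2) * gaussianPDFReal 0 c.toNNReal x) := by
    rw [hfun]; exact (integrable_exp_neg_mul_sq hb).const_mul _
  have hval : ∫ x, Real.exp (t * x^2) * gaussianPDFReal 0 c.toNNReal x
      = (Real.sqrt (1 - 2*t*c))⁻¹ := by
    rw [hfun, integral_const_mul, integral_gaussian]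
    have h1 : π / b = (2*π*c) / (1 - 2*t*c) := by
      rw [hbdef]; field_simp [hc.ne']
    rw [h1, Real.sqrt_div (by positivity)]
    have h2 : Real.sqrt (2*π*c) ≠ 0 := by positivity
    field_simp
  -- transport to the gaussian measure
  have hrw : gaussianReal 0 c.toNNReal = volume.withDensity (gaussianPDF 0 c.toNNReal) :=
    gaussianReal_of_var_ne_zero 0 hvne
  have hpdfm := measurable_gaussianPDF 0 c.toNNReal
  have hgi : Integrable (fun x => Real.exp (t * x^2)) (gaussianReal 0 c.toNNReal) := by
    rw [hrw, integrable_withDensity_iff hpdfm (ae_of_all _ fun x => ENNReal.ofReal_lt_top)]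
    have : (fun x => Real.exp (t * x^2) * (gaussianPDF 0 c.toNNReal x).toReal)
        = fun x => Real.exp (t * x^2) * gaussianPDFReal 0 c.toNNReal x := by
      ext x
      rw [gaussianPDF_def]
      simp [ENNReal.toReal_ofReal (gaussianPDFReal_nonneg 0 c.toNNReal x)]
    rw [this]
    exact hint
  refine ⟨hgi, ?_⟩
  rw [hrw]
  have : volume.withDensity (gaussianPDF 0 c.toNNReal)
      = volume.withDensity (fun x => ((gaussianPDFReal 0 c.toNNReal x).toNNReal : ℝ≥0∞)) := rfl
  rw [this, integral_withDensity_eq_integral_smul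
    ((measurable_gaussianPDFReal 0 c.toNNReal).real_toNNReal)]
  rw [← hval]
  congr 1
  ext x
  rw [NNReal.smul_def, smul_eq_mul, Real.coe_toNNReal _ (gaussianPDFReal_nonneg 0 c.toNNReal x)]
  ring

lemma mgf_sq_of_gauss {Ω : Type*} [MeasurableSpace Ω] (Pr : Measure Ω) (X : Ω → ℝ)
    (hXm : Measurable X) (c : ℝ) (hc : 0 < c)
    (hlaw : Measure.map X Pr = gaussianReal 0 c.toNNReal) (t : ℝ) (ht : 2*t*c < 1) :
    Integrable (fun ω => Real.exp (t * (X ω)^2)) Pr ∧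
    mgf (fun ω => (X ω)^2) Pr t = (Real.sqrt (1 - 2*t*c))⁻¹ := by
  obtain ⟨hint, hval⟩ := gauss_exp_sq c hc t ht
  have hgm : Measurable (fun x : ℝ => Real.exp (t * x^2)) := by measurability
  have hg : AEStronglyMeasurable (fun x : ℝ => Real.exp (t * x^2)) (Measure.map X Pr) :=
    hgm.aestronglyMeasurable
  constructor
  · have := (integrable_map_measure hg hXm.aemeasurable).1 (by rwa [hlaw])
    exact this
  · have h2 : ∫ ω, Real.exp (t * (X ω)^2) ∂Pr
        = ∫ x, Real.exp (t * x^2) ∂(Measure.map X Pr) :=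
      (integral_map hXm.aemeasurable hg).symm
    rw [mgf, h2, hlaw, hval]

/-- Let Φ be the random matrix with rows (1/√K)Zᵢᵀ, where Z₁,…,Z_K are iid N(0,Σ),
K ≥ 3.  For any fixed v and w > √e, with probability at least 1 − (√e/w)^K,
w⁻¹‖v‖_Σ ≤ ‖Φv‖₂ ≤ w‖v‖_Σ, where ‖Φv‖₂² = (1/K)∑ᵢ(Zᵢᵀv)². -/
theorem stmt3 {Ω : Type*} [MeasurableSpace Ω] (Pr : Measure Ω) [IsProbabilityMeasure Pr]
    (N K : ℕ) (hK : 3 ≤ K)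
    (S : Matrix (Fin N) (Fin N) ℝ) (hS : S.PosSemidef)
    (Z : Fin K → Ω → (Fin N → ℝ))
    (hmeas : ∀ i, Measurable (Z i))
    (hindep : iIndepFun Z Pr)
    (hgauss : ∀ i (a : Fin N → ℝ),
      Measure.map (fun ω => Z i ω ⬝ᵥ a) Pr
        = gaussianReal 0 (Real.toNNReal (a ⬝ᵥ S.mulVec a)))
    (v : Fin N → ℝ) (w : ℝ) (hw : Real.sqrt (Real.exp 1) < w) :
    ENNReal.ofReal (1 - (Real.sqrt (Real.exp 1) / w) ^ K) ≤
      Pr {ω | w⁻¹ * Real.sqrt (v ⬝ᵥ S.mulVec v)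
                ≤ Real.sqrt ((1 / (K : ℝ)) * ∑ i, (Z i ω ⬝ᵥ v) ^ 2)
              ∧ Real.sqrt ((1 / (K : ℝ)) * ∑ i, (Z i ω ⬝ᵥ v) ^ 2)
                ≤ w * Real.sqrt (v ⬝ᵥ S.mulVec v)} := by
  have hw0 : 0 < w := lt_trans (Real.sqrt_pos.2 (Real.exp_pos 1)) hw
  set c : ℝ := v ⬝ᵥ S.mulVec v with hcdef
  have hc0 : 0 ≤ c := by
    have := hS.dotProduct_mulVec_nonneg v
    simpa using this
  -- measurability
  have hXm : ∀ i, Measurable (fun ω => Z i ω ⬝ᵥ v) := by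
    intro i
    simp only [dotProduct]
    exact Finset.measurable_sum _ fun j _ => ((measurable_pi_apply j).comp (hmeas i)).mul_const _
  have hfm : Measurable (fun ω => Real.sqrt ((1 / (K : ℝ)) * ∑ i, (Z i ω ⬝ᵥ v) ^ 2)) := by
    apply Real.continuous_sqrt.measurable.comp
    exact (Finset.measurable_sum _ fun i _ => (hXm i).pow_const 2).const_mul _
  set E : Set Ω := {ω | w⁻¹ * Real.sqrt c
                ≤ Real.sqrt ((1 / (K : ℝ)) * ∑ i, (Z i ω ⬝ᵥ v) ^ 2)
              ∧ Real.sqrt ((1 / (K : ℝ)) * ∑ i, (Z i ω ⬝ᵥ v) ^ 2)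
                ≤ w * Real.sqrt c} with hEdef
  have hE : MeasurableSet E :=
    (measurableSet_le measurable_const hfm).inter (measurableSet_le hfm measurable_const)
  have hq0 : 0 ≤ (Real.sqrt (Real.exp 1) / w) ^ K := by positivity
  rcases eq_or_lt_of_le hc0 with hc | hc
  · -- degenerate case : variance zero
    have hPrE : Pr E = 1 := by
      rw [← prob_compl_eq_zero_iff hE]
      have hsub : Eᶜ ⊆ ⋃ i, {ω | Z i ω ⬝ᵥ v ≠ 0} := by
        intro ω hω
        by_contra h
        simp only [Set.mem_iUnion, Set.mem_setOf_eq, not_exists, not_not] at h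
        apply hω
        have hz : ((1 / (K : ℝ)) * ∑ i, (Z i ω ⬝ᵥ v) ^ 2) = 0 := by
          rw [Finset.sum_congr rfl fun i _ => by rw [h i]]
          simp
        constructor <;> rw [hz] <;> rw [Real.sqrt_zero, ← hc, Real.sqrt_zero] <;> simp
      refine le_antisymm (le_trans (measure_mono hsub) ?_) (zero_le)
      refine le_trans (measure_iUnion_le _) ?_
      have hzero : ∀ i : Fin K, Pr {ω | Z i ω ⬝ᵥ v ≠ 0} = 0 := by
        intro i
        have : {ω | Z i ω ⬝ᵥ v ≠ 0} = (fun ω => Z i ω ⬝ᵥ v) ⁻¹' ({0}ᶜ) := by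
          ext ω; simp
        rw [this, ← Measure.map_apply (hXm i) (measurableSet_singleton 0).compl, hgauss i v,
          ← hcdef, ← hc]
        simp only [Real.toNNReal_zero, gaussianReal_zero_var]
        rw [Measure.dirac_apply' _ (measurableSet_singleton 0).compl]
        simp
      simp [hzero]
    rw [hPrE]
    exact ENNReal.ofReal_le_one.2 (by linarith)
  · -- main case : positive variance
    set u : ℝ := w^2 with hudef
    have hsq : Real.sqrt (Real.exp 1) ^ 2 = Real.exp 1 := Real.sq_sqrt (Real.exp_pos 1).le
    have hu_gt : Real.exp 1 < u := by
      calc Real.exp 1 = Real.sqrt (Real.exp 1)^2 := hsq.symm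
      _ < w^2 := by
          apply pow_lt_pow_left₀ hw (Real.sqrt_nonneg _)
          norm_num
    have hu1 : 1 < u := by
      have := Real.exp_one_gt_d9; linarith
    have hu0 : 0 < u := by positivity
    have hK3 : (3:ℝ) ≤ (K:ℝ) := by exact_mod_cast hK
    have hKpos : (0:ℝ) < (K:ℝ) := by linarith
    set Y : Fin K → Ω → ℝ := fun i ω => (Z i ω ⬝ᵥ v)^2 with hYdef
    have hYm : ∀ i, Measurable (Y i) := fun i => (hXm i).pow_const 2
    have hdot : Measurable (fun x : Fin N → ℝ => x ⬝ᵥ v) := by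
      simp only [dotProduct]
      exact Finset.measurable_sum _ fun j _ => (measurable_pi_apply j).mul_const _
    have hYindep : iIndepFun Y Pr := by
      have := hindep.comp (fun _ (x : Fin N → ℝ) => (x ⬝ᵥ v)^2)
        (fun _ => hdot.pow_const 2)
      exact this
    have hmgf : ∀ t : ℝ, 2*t*c < 1 →
        (∀ i, Integrable (fun ω => Real.exp (t * Y i ω)) Pr) ∧
        (∀ i, mgf (Y i) Pr t = (Real.sqrt (1-2*t*c))⁻¹) := by
      intro t ht
      constructor <;> intro i
      · exact (mgf_sq_of_gauss Pr _ (hXm i) c hc (hgauss i v) t ht).1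
      · exact (mgf_sq_of_gauss Pr _ (hXm i) c hc (hgauss i v) t ht).2
    -- upper tail
    set t1 : ℝ := (u-1)/(2*c*u) with ht1def
    have ht1nn : 0 ≤ t1 := by
      apply div_nonneg (by linarith) (by positivity)
    have ht1c2 : 2*t1*c = (u-1)/u := by
      rw [ht1def]; field_simp
    have ht1c : 2*t1*c < 1 := by
      rw [ht1c2, div_lt_one hu0]; linarith
    have hs1 : (Real.sqrt (1 - 2*t1*c))⁻¹ = w := by
      have h1 : 1 - 2*t1*c = 1/u := by rw [ht1c2]; field_simp; ring
      rw [h1, one_div, Real.sqrt_inv, inv_inv, hudef, Real.sqrt_sq hw0.le]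
    obtain ⟨hint1, hval1⟩ := hmgf t1 ht1c
    have hInt1 : Integrable (fun ω => Real.exp (t1 * (∑ i, Y i) ω)) Pr :=
      hYindep.integrable_exp_mul_sum hYm (fun i _ => hint1 i)
    have hmgfsum1 : mgf (∑ i, Y i) Pr t1 = w^K := by
      rw [hYindep.mgf_sum hYm, Finset.prod_congr rfl (fun i _ => hval1 i),
        Finset.prod_const, Finset.card_univ, Fintype.card_fin, hs1]
    have hcher1 := measure_ge_le_exp_mul_mgf (μ := Pr) (X := ∑ i, Y i)
      ((K:ℝ)*(u*c)) ht1nn hInt1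
    rw [hmgfsum1] at hcher1
    have hexp1 : -t1 * ((K:ℝ)*(u*c)) = -(K:ℝ)*(u-1)/2 := by
      rw [ht1def]; field_simp
    rw [hexp1] at hcher1
    -- lower tail
    set t2 : ℝ := -(u-1)/(2*c) with ht2def
    have ht2np : t2 ≤ 0 := by
      apply div_nonpos_of_nonpos_of_nonneg (by linarith) (by positivity)
    have ht2c2 : 2*t2*c = -(u-1) := by
      rw [ht2def]; field_simp
    have ht2c : 2*t2*c < 1 := by rw [ht2c2]; linarith
    have hs2 : (Real.sqrt (1 - 2*t2*c))⁻¹ = w⁻¹ := by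
      have h1 : 1 - 2*t2*c = u := by rw [ht2c2]; ring
      rw [h1, hudef, Real.sqrt_sq hw0.le]
    obtain ⟨hint2, hval2⟩ := hmgf t2 ht2c
    have hInt2 : Integrable (fun ω => Real.exp (t2 * (∑ i, Y i) ω)) Pr :=
      hYindep.integrable_exp_mul_sum hYm (fun i _ => hint2 i)
    have hmgfsum2 : mgf (∑ i, Y i) Pr t2 = (w⁻¹)^K := by
      rw [hYindep.mgf_sum hYm, Finset.prod_congr rfl (fun i _ => hval2 i),
        Finset.prod_const, Finset.card_univ, Fintype.card_fin, hs2]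
    have hcher2 := measure_le_le_exp_mul_mgf (μ := Pr) (X := ∑ i, Y i)
      ((K:ℝ)*(c/u)) ht2np hInt2
    rw [hmgfsum2] at hcher2
    have hexp2 : -t2 * ((K:ℝ)*(c/u)) = (K:ℝ)*(u-1)/(2*u) := by
      rw [ht2def]; field_simp
    rw [hexp2] at hcher2
    -- set inclusion
    have hsub : Eᶜ ⊆ {ω | (∑ i, Y i) ω ≤ (K:ℝ)*(c/u)} ∪ {ω | (K:ℝ)*(u*c) ≤ (∑ i, Y i) ω} := by
      intro ω hω
      by_contra h
      simp only [Set.mem_union, Set.mem_setOf_eq, not_or, not_le] at h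
      obtain ⟨h1, h2⟩ := h
      apply hω
      have hTsum : (∑ i, Y i) ω = ∑ i, (Z i ω ⬝ᵥ v)^2 := by
        simp [hYdef]
      rw [hTsum] at h1 h2
      constructor
      · have hle : c/u ≤ (1/(K:ℝ))*∑ i, (Z i ω ⬝ᵥ v)^2 := by
          have h1' : (K:ℝ)*(c/u) ≤ ∑ i, (Z i ω ⬝ᵥ v)^2 := le_of_lt h1
          calc c/u = (1/(K:ℝ))*((K:ℝ)*(c/u)) := by field_simp
          _ ≤ _ := mul_le_mul_of_nonneg_left h1' (by positivity)
        have heq : w⁻¹ * Real.sqrt c = Real.sqrt (c/u) := by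
          rw [Real.sqrt_div hc0, hudef, Real.sqrt_sq hw0.le]
          ring
        rw [heq]
        exact Real.sqrt_le_sqrt hle
      · have hle : (1/(K:ℝ))*∑ i, (Z i ω ⬝ᵥ v)^2 ≤ u*c := by
          have h2' : ∑ i, (Z i ω ⬝ᵥ v)^2 ≤ (K:ℝ)*(u*c) := le_of_lt h2
          calc (1/(K:ℝ))*∑ i, (Z i ω ⬝ᵥ v)^2 ≤ (1/(K:ℝ))*((K:ℝ)*(u*c)) :=
                mul_le_mul_of_nonneg_left h2' (by positivity)
          _ = u*c := by field_simp
        have heq : w * Real.sqrt c = Real.sqrt (u*c) := by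
          rw [Real.sqrt_mul hu0.le, hudef, Real.sqrt_sq hw0.le]
        rw [heq]
        exact Real.sqrt_le_sqrt hle
    -- combine bounds
    have hPrEc : (Pr Eᶜ).toReal ≤
        Real.exp ((K:ℝ)*(u-1)/(2*u)) * (w⁻¹)^K + Real.exp (-(K:ℝ)*(u-1)/2) * w^K := by
      calc (Pr Eᶜ).toReal
          ≤ (Pr ({ω | (∑ i, Y i) ω ≤ (K:ℝ)*(c/u)} ∪ {ω | (K:ℝ)*(u*c) ≤ (∑ i, Y i) ω})).toReal :=
            ENNReal.toReal_mono (measure_ne_top _ _) (measure_mono hsub)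
        _ ≤ (Pr {ω | (∑ i, Y i) ω ≤ (K:ℝ)*(c/u)}).toReal
            + (Pr {ω | (K:ℝ)*(u*c) ≤ (∑ i, Y i) ω}).toReal := by
            rw [← ENNReal.toReal_add (measure_ne_top _ _) (measure_ne_top _ _)]
            exact ENNReal.toReal_mono
              (ENNReal.add_ne_top.2 ⟨measure_ne_top _ _, measure_ne_top _ _⟩)
              (measure_union_le _ _)
        _ ≤ _ := add_le_add hcher2 hcher1
    -- arithmetic : the two bounds sum to at most (sqrt e / w)^K
    set q : ℝ := (Real.sqrt (Real.exp 1) / w) ^ K with hqdef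
    have hsqrt_e : Real.sqrt (Real.exp 1) = Real.exp 2⁻¹ := by
      have h : Real.exp 2⁻¹ * Real.exp 2⁻¹ = Real.exp 1 := by
        rw [← Real.exp_add]; norm_num
      rw [← h, Real.sqrt_mul_self (Real.exp_pos _).le]
    have hqe : q = Real.exp ((K:ℝ)*2⁻¹) * (w⁻¹)^K := by
      rw [hqdef, hsqrt_e, div_pow, ← Real.exp_nat_mul, inv_pow, div_eq_mul_inv]
    have ha : Real.exp ((K:ℝ)*(u-1)/(2*u)) * (w⁻¹)^K
        = q * Real.exp (-(K:ℝ)/(2*u)) := by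
      rw [hqe, mul_assoc, mul_comm ((w⁻¹:ℝ)^K), ← mul_assoc, ← Real.exp_add]
      congr 2
      field_simp
      ring
    have hpow : (w⁻¹)^K * u^K = w^K := by
      rw [hudef, ← mul_pow]
      congr 1
      field_simp
    have hb : Real.exp (-(K:ℝ)*(u-1)/2) * w^K = q * (u * Real.exp (-u/2))^K := by
      rw [hqe, mul_pow, ← Real.exp_nat_mul]
      calc Real.exp (-(K:ℝ)*(u-1)/2) * w^K
          = (Real.exp ((K:ℝ)*2⁻¹) * Real.exp ((K:ℝ)*(-u/2))) * ((w⁻¹)^K * u^K) := by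
            rw [hpow, ← Real.exp_add]
            congr 2
            ring
        _ = Real.exp ((K:ℝ)*2⁻¹) * (w⁻¹)^K * (u^K * Real.exp ((K:ℝ)*(-u/2))) := by ring
    have hq0' : (0:ℝ) ≤ q := hq0
    have hfinal : Real.exp ((K:ℝ)*(u-1)/(2*u)) * (w⁻¹)^K
        + Real.exp (-(K:ℝ)*(u-1)/2) * w^K ≤ q := by
      rw [ha, hb, ← mul_add]
      have hcore := core_ineq u hu_gt K hK
      calc q * (Real.exp (-(K:ℝ)/(2*u)) + (u * Real.exp (-u/2))^K)
          ≤ q * 1 := mul_le_mul_of_nonneg_left hcore hq0'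
        _ = q := mul_one q
    -- wrap up
    have hPrEc2 : Pr Eᶜ ≤ ENNReal.ofReal q := by
      rw [← ENNReal.ofReal_toReal (measure_ne_top Pr Eᶜ)]
      exact ENNReal.ofReal_le_ofReal (hPrEc.trans hfinal)
    have hgoal : Pr E = 1 - Pr Eᶜ := by
      have h := prob_compl_eq_one_sub (μ := Pr) hE.compl
      rwa [compl_compl] at h
    rw [hgoal]
    calc ENNReal.ofReal (1 - q) = 1 - ENNReal.ofReal q := by
          rw [ENNReal.ofReal_sub 1 hq0', ENNReal.ofReal_one]
      _ ≤ 1 - Pr Eᶜ := tsub_le_tsub_left hPrEc2 1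
end

section
/- Let M = {v₁,…,v_{#M}} ⊂ ℝ^N be a finite set of vectors, 0 < δ < 1, w > √e, and let Φ be the random Gaussian map with K rows as above. If K ≥ max{ (log(#M) + log(1/δ)) / log(w/√e), 3 }, then with probability at least 1 − δ, for every v ∈ M simultaneously: w⁻¹‖v‖_Σ ≤ ‖Φv‖₂ ≤ w‖v‖_Σ. -/
open MeasureTheory ProbabilityTheory Real Matrix
open scoped NNReal ENNReal


lemma gauss_pdf_mul (V : ℝ≥0) (hV : (0:ℝ) < V) {t : ℝ} (ht : 2 * t * (V:ℝ) < 1) (x : ℝ) :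
    gaussianPDFReal 0 V x * Real.exp (t * x ^ 2)
      = (Real.sqrt (2 * π * V))⁻¹ * Real.exp (-((1 - 2*t*(V:ℝ))/(2*(V:ℝ))) * x ^ 2) := by
  rw [gaussianPDFReal]
  rw [mul_assoc, ← Real.exp_add]
  congr 2
  field_simp
  ring

lemma integrable_pdf_mul_exp_sq (V : ℝ≥0) (hV : (0:ℝ) < V) {t : ℝ} (ht : 2 * t * (V:ℝ) < 1) :
    Integrable (fun x => gaussianPDFReal 0 V x * Real.exp (t * x ^ 2)) volume := by
  have hb : 0 < (1 - 2*t*(V:ℝ))/(2*(V:ℝ)) := div_pos (by linarith) (by linarith)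
  have := (integrable_exp_neg_mul_sq hb).const_mul (Real.sqrt (2 * π * V))⁻¹
  refine this.congr ?_
  filter_upwards with x
  rw [gauss_pdf_mul V hV ht x]

lemma integral_pdf_mul_exp_sq (V : ℝ≥0) (hV : (0:ℝ) < V) {t : ℝ} (ht : 2 * t * (V:ℝ) < 1) :
    ∫ x, gaussianPDFReal 0 V x * Real.exp (t * x ^ 2)
      = Real.sqrt (1 - 2*t*(V:ℝ))⁻¹ := by
  have hb : 0 < (1 - 2*t*(V:ℝ))/(2*(V:ℝ)) := div_pos (by linarith) (by linarith)
  calc ∫ x, gaussianPDFReal 0 V x * Real.exp (t * x ^ 2)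
      = ∫ x, (Real.sqrt (2 * π * V))⁻¹ * Real.exp (-((1 - 2*t*(V:ℝ))/(2*(V:ℝ))) * x ^ 2) := by
        refine integral_congr_ae ?_
        filter_upwards with x using gauss_pdf_mul V hV ht x
    _ = (Real.sqrt (2 * π * V))⁻¹ * ∫ x, Real.exp (-((1 - 2*t*(V:ℝ))/(2*(V:ℝ))) * x ^ 2) :=
        integral_const_mul _ _
    _ = (Real.sqrt (2 * π * V))⁻¹ * Real.sqrt (π / ((1 - 2*t*(V:ℝ))/(2*(V:ℝ)))) := by
        rw [integral_gaussian]
    _ = Real.sqrt (1 - 2*t*(V:ℝ))⁻¹ := by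
        rw [← Real.sqrt_inv, ← Real.sqrt_mul (by positivity)]
        congr 1
        have hπ : (0:ℝ) < π := Real.pi_pos
        have h1 : (1 - 2 * t * (V:ℝ)) ≠ 0 := by linarith
        have h2 : (V:ℝ) ≠ 0 := ne_of_gt hV
        have h3 : π ≠ 0 := ne_of_gt Real.pi_pos
        field_simp

lemma integrable_dirac' {f : ℝ → ℝ} (hf : Measurable f) :
    Integrable f (Measure.dirac 0) := by
  refine ⟨hf.aestronglyMeasurable, ?_⟩
  rw [HasFiniteIntegral, lintegral_dirac' _ (by measurability)]
  exact ENNReal.coe_lt_top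

lemma integrable_exp_sq_gaussianReal (V : ℝ≥0) {t : ℝ} (ht : 2*t*(V:ℝ) < 1) :
    Integrable (fun x => Real.exp (t * x ^ 2)) (gaussianReal 0 V) := by
  rcases eq_or_ne V 0 with rfl|h
  · rw [gaussianReal_zero_var]
    exact integrable_dirac' (by measurability)
  · have hV : (0:ℝ) < V := by positivity
    rw [gaussianReal_of_var_ne_zero _ h]
    rw [integrable_withDensity_iff (measurable_gaussianPDF _ _)
      (ae_of_all _ fun x => ENNReal.ofReal_lt_top)]
    refine (integrable_pdf_mul_exp_sq V hV ht).congr ?_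
    filter_upwards with x
    rw [gaussianPDF, ENNReal.toReal_ofReal (gaussianPDFReal_nonneg _ _ _)]
    ring

lemma integral_exp_sq_gaussianReal (V : ℝ≥0) {t : ℝ} (ht : 2*t*(V:ℝ) < 1) :
    ∫ x, Real.exp (t * x ^ 2) ∂(gaussianReal 0 V) = Real.sqrt (1 - 2*t*(V:ℝ))⁻¹ := by
  rcases eq_or_ne V 0 with rfl|h
  · rw [gaussianReal_zero_var, integral_dirac]
    norm_num
  · have hV : (0:ℝ) < V := by positivity
    rw [gaussianReal_of_var_ne_zero _ h]
    have : (gaussianPDF 0 V) = fun x => ((Real.toNNReal (gaussianPDFReal 0 V x) : ℝ≥0) : ℝ≥0∞) :=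
      rfl
    rw [this, integral_withDensity_eq_integral_smul
      ((measurable_gaussianPDFReal 0 V).real_toNNReal)]
    rw [← integral_pdf_mul_exp_sq V hV ht]
    refine integral_congr_ae ?_
    filter_upwards with x
    rw [NNReal.smul_def, Real.coe_toNNReal _ (gaussianPDFReal_nonneg _ _ _), smul_eq_mul]

section MGF
variable {Ω : Type*} [MeasurableSpace Ω] (Pr : Measure Ω) [IsProbabilityMeasure Pr]

lemma gauss_sq_integrable_exp (X : Ω → ℝ) (hX : Measurable X) (V : ℝ≥0)
    (hlaw : Pr.map X = gaussianReal 0 V) {t : ℝ} (ht : 2*t*(V:ℝ) < 1) :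
    Integrable (fun ω => Real.exp (t * (X ω)^2)) Pr := by
  have h1 : Integrable (fun x => Real.exp (t * x^2)) (Pr.map X) :=
    hlaw ▸ integrable_exp_sq_gaussianReal V ht
  exact (integrable_map_measure h1.aestronglyMeasurable hX.aemeasurable).mp h1

lemma gauss_sq_mgf (X : Ω → ℝ) (hX : Measurable X) (V : ℝ≥0)
    (hlaw : Pr.map X = gaussianReal 0 V) {t : ℝ} (ht : 2*t*(V:ℝ) < 1) :
    mgf (fun ω => (X ω)^2) Pr t = Real.sqrt (1 - 2*t*(V:ℝ))⁻¹ := by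
  have h1 : Integrable (fun x => Real.exp (t * x^2)) (Pr.map X) :=
    hlaw ▸ integrable_exp_sq_gaussianReal V ht
  rw [mgf, ← integral_map hX.aemeasurable h1.aestronglyMeasurable, hlaw,
    integral_exp_sq_gaussianReal V ht]

variable (K : ℕ) (X : Fin K → Ω → ℝ) (hX : ∀ i, Measurable (X i))
    (hind : iIndepFun (fun i => fun ω => (X i ω)^2) Pr)
    (V : ℝ≥0) (hlaw : ∀ i, Pr.map (X i) = gaussianReal 0 V)

include hX hind hlaw in
lemma gauss_sq_sum_mgf {t : ℝ} (ht : 2*t*(V:ℝ) < 1) :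
    mgf (∑ i, fun ω => (X i ω)^2) Pr t = (Real.sqrt (1 - 2*t*(V:ℝ))⁻¹)^K := by
  rw [iIndepFun.mgf_sum hind (fun i => ((hX i).pow_const 2)) Finset.univ]
  rw [Finset.prod_congr rfl (fun i _ => gauss_sq_mgf Pr (X i) (hX i) V (hlaw i) ht)]
  simp

include hX hind hlaw in
lemma gauss_sq_sum_integrable {t : ℝ} (ht : 2*t*(V:ℝ) < 1) :
    Integrable (fun ω => Real.exp (t * (∑ i, fun ω' => (X i ω')^2) ω)) Pr := by
  exact iIndepFun.integrable_exp_mul_sum hind (fun i => ((hX i).pow_const 2))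
    (fun i _ => gauss_sq_integrable_exp Pr (X i) (hX i) V (hlaw i) ht)

include hX hind hlaw in
lemma gauss_sq_upper_tail {t : ℝ} (ht0 : 0 ≤ t) (ht : 2*t*(V:ℝ) < 1) (ε : ℝ) :
    (Pr {ω | ε ≤ ∑ i, (X i ω)^2}).toReal
      ≤ Real.exp (-t*ε) * (Real.sqrt (1 - 2*t*(V:ℝ))⁻¹)^K := by
  have h := measure_ge_le_exp_mul_mgf (μ := Pr) (X := ∑ i, fun ω => (X i ω)^2) ε ht0
    (gauss_sq_sum_integrable Pr K X hX hind V hlaw ht)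
  rw [gauss_sq_sum_mgf Pr K X hX hind V hlaw ht] at h
  have hs : {ω | ε ≤ ∑ i, (X i ω)^2} = {ω | ε ≤ (∑ i, fun ω' => (X i ω')^2) ω} := by
    ext ω; simp [Finset.sum_apply]
  rw [hs]
  exact h

include hX hind hlaw in
lemma gauss_sq_lower_tail {t : ℝ} (ht0 : t ≤ 0) (ht : 2*t*(V:ℝ) < 1) (ε : ℝ) :
    (Pr {ω | ∑ i, (X i ω)^2 ≤ ε}).toReal
      ≤ Real.exp (-t*ε) * (Real.sqrt (1 - 2*t*(V:ℝ))⁻¹)^K := by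
  have h := measure_le_le_exp_mul_mgf (μ := Pr) (X := ∑ i, fun ω => (X i ω)^2) ε ht0
    (gauss_sq_sum_integrable Pr K X hX hind V hlaw ht)
  rw [gauss_sq_sum_mgf Pr K X hX hind V hlaw ht] at h
  have hs : {ω | ∑ i, (X i ω)^2 ≤ ε} = {ω | (∑ i, fun ω' => (X i ω')^2) ω ≤ ε} := by
    ext ω; simp [Finset.sum_apply]
  rw [hs]
  exact h
end MGF

lemma key_poly {u : ℝ} (hu : 2.7182818 ≤ u) : 2*u^4 + 3*u^3 ≤ 3 * Real.exp (3*u/2) := by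
  have hx : (0:ℝ) ≤ 3*u/2 := by nlinarith
  have h := Real.sum_le_exp_of_nonneg hx 10
  simp only [Finset.sum_range_succ, Finset.sum_range_zero] at h
  norm_num [Nat.factorial] at h
  have hs : (0:ℝ) ≤ u - 2.7182818 := by linarith
  nlinarith [pow_nonneg hs 2, pow_nonneg hs 3, pow_nonneg hs 4, pow_nonneg hs 5,
    pow_nonneg hs 6, pow_nonneg hs 7, pow_nonneg hs 8, pow_nonneg hs 9, h]

lemma exp1_lb : (2.7182818:ℝ) ≤ Real.exp 1 := le_of_lt (by
  have := Real.exp_one_gt_d9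
  norm_num at this ⊢
  linarith)

lemma key_ineq {u : ℝ} (hu : Real.exp 1 ≤ u) :
    u^3 * Real.exp (-(3*u)/2) + Real.exp (-3/(2*u)) ≤ 1 := by
  have hu' : (2.7182818:ℝ) ≤ u := le_trans exp1_lb hu
  have hu0 : (0:ℝ) < u := by linarith
  have h23 : (0:ℝ) < 2*u + 3 := by linarith
  have h1 : Real.exp (-3/(2*u)) ≤ 2*u/(2*u+3) := by
    have he : 1 + 3/(2*u) ≤ Real.exp (3/(2*u)) := by rw [add_comm]; exact Real.add_one_le_exp _
    have he' : (2*u+3)/(2*u) ≤ Real.exp (3/(2*u)) := by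
      refine le_trans (le_of_eq ?_) he
      field_simp
    have hep : (0:ℝ) < Real.exp (3/(2*u)) := Real.exp_pos _
    rw [show (-3/(2*u)) = -(3/(2*u)) by ring, Real.exp_neg]
    calc (Real.exp (3/(2*u)))⁻¹ ≤ ((2*u+3)/(2*u))⁻¹ := by
          exact inv_anti₀ (by positivity) he'
      _ = 2*u/(2*u+3) := by rw [inv_div]
  have h2 : u^3 * Real.exp (-(3*u)/2) ≤ 3/(2*u+3) := by
    rw [show (-(3*u)/2 : ℝ) = -(3*u/2) by ring, Real.exp_neg, ← div_eq_mul_inv,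
      div_le_div_iff₀ (Real.exp_pos _) h23]
    nlinarith [key_poly hu']
  calc u^3 * Real.exp (-(3*u)/2) + Real.exp (-3/(2*u)) ≤ 3/(2*u+3) + 2*u/(2*u+3) :=
        add_le_add h2 h1
    _ = 1 := by field_simp; ring

lemma sqrt_exp_one : Real.sqrt (Real.exp 1) = Real.exp (1/2) := by
  have h : Real.exp (1/2) ^ 2 = Real.exp 1 := by
    rw [sq, ← Real.exp_add]; norm_num
  rw [← h, Real.sqrt_sq (Real.exp_pos _).le]

lemma u_le_exp_half {u : ℝ} (hu : 0 ≤ u) : u ≤ Real.exp (u/2) := by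
  have h := Real.sum_le_exp_of_nonneg (by positivity : (0:ℝ) ≤ u/2) 3
  simp only [Finset.sum_range_succ, Finset.sum_range_zero] at h
  norm_num [Nat.factorial] at h
  nlinarith [sq_nonneg (u - 4)]

lemma per_v_tail {Ω : Type*} [MeasurableSpace Ω] (Pr : Measure Ω) [IsProbabilityMeasure Pr]
    (K : ℕ) (hK3 : 3 ≤ K) (X : Fin K → Ω → ℝ) (hX : ∀ i, Measurable (X i))
    (hind : iIndepFun (fun i => fun ω => (X i ω)^2) Pr)
    (V : ℝ≥0) (hV : 0 < (V:ℝ))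
    (hlaw : ∀ i, Pr.map (X i) = gaussianReal 0 V)
    (w : ℝ) (hw : Real.sqrt (Real.exp 1) < w) :
    (Pr ({ω | ∑ i, (X i ω)^2 ≤ (K:ℝ)*(V:ℝ)/w^2}
        ∪ {ω | (K:ℝ)*(V:ℝ)*w^2 ≤ ∑ i, (X i ω)^2})).toReal
      ≤ (Real.sqrt (Real.exp 1)/w)^K := by
  have he1 : (1:ℝ) < Real.exp 1 := by linarith [exp1_lb]
  have hsw : (1:ℝ) < Real.sqrt (Real.exp 1) := by
    nlinarith [Real.sq_sqrt (Real.exp_pos 1).le, Real.sqrt_nonneg (Real.exp 1)]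
  have hw1 : 1 < w := lt_trans hsw hw
  have hw0 : (0:ℝ) < w := by linarith
  set u := w^2 with hu_def
  have hu : Real.exp 1 < u := by
    have h := Real.sq_sqrt (Real.exp_pos 1).le
    have := Real.sqrt_nonneg (Real.exp 1)
    nlinarith
  have hu1 : (1:ℝ) < u := lt_trans he1 hu
  have hu0 : (0:ℝ) < u := by linarith
  set q := Real.sqrt (Real.exp 1) / w with hq_def
  set a := u * Real.exp (-u/2) with ha_def
  set b := Real.exp (-1/(2*u)) with hb_def
  -- upper tail
  set t₁ := (1 - 1/u)/(2*(V:ℝ)) with ht₁def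
  have h2t₁ : 1 - 2*t₁*(V:ℝ) = 1/u := by
    rw [ht₁def]; field_simp; ring
  have ht₁0 : 0 ≤ t₁ := by
    apply div_nonneg _ (by positivity)
    have : 1/u < 1 := by rw [div_lt_one hu0]; exact hu1
    linarith
  have ht₁ : 2*t₁*(V:ℝ) < 1 := by
    have : (0:ℝ) < 1/u := by positivity
    linarith [h2t₁]
  have hup := gauss_sq_upper_tail Pr K X hX hind V hlaw ht₁0 ht₁ ((K:ℝ)*(V:ℝ)*u)
  have equp : Real.exp (-t₁*((K:ℝ)*(V:ℝ)*u)) * (Real.sqrt (1 - 2*t₁*(V:ℝ))⁻¹)^K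
      = (q*a)^K := by
    rw [h2t₁, one_div, inv_inv, show Real.sqrt u = w by rw [hu_def, Real.sqrt_sq hw0.le]]
    have hexp : -t₁*((K:ℝ)*(V:ℝ)*u) = (K:ℝ)*(-(u-1)/2) := by
      rw [ht₁def]; field_simp
    rw [hexp, Real.exp_nat_mul, ← mul_pow]
    congr 1
    rw [hq_def, ha_def, sqrt_exp_one, show (-(u-1)/2) = 1/2 + (-u/2) by ring, Real.exp_add,
      hu_def]
    field_simp
  -- lower tail
  set t₂ := (1 - u)/(2*(V:ℝ)) with ht₂def
  have h2t₂ : 1 - 2*t₂*(V:ℝ) = u := by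
    rw [ht₂def]; field_simp; ring
  have ht₂0 : t₂ ≤ 0 := by
    apply div_nonpos_of_nonpos_of_nonneg _ (by positivity)
    linarith
  have ht₂ : 2*t₂*(V:ℝ) < 1 := by linarith [h2t₂]
  have hlo := gauss_sq_lower_tail Pr K X hX hind V hlaw ht₂0 ht₂ ((K:ℝ)*(V:ℝ)/u)
  have eqlo : Real.exp (-t₂*((K:ℝ)*(V:ℝ)/u)) * (Real.sqrt (1 - 2*t₂*(V:ℝ))⁻¹)^K
      = (q*b)^K := by
    rw [h2t₂, Real.sqrt_inv, show Real.sqrt u = w by rw [hu_def, Real.sqrt_sq hw0.le]]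
    have hexp : -t₂*((K:ℝ)*(V:ℝ)/u) = (K:ℝ)*((u-1)/(2*u)) := by
      rw [ht₂def]; field_simp; ring
    rw [hexp, Real.exp_nat_mul, ← mul_pow]
    congr 1
    rw [hq_def, hb_def, sqrt_exp_one, show ((u-1)/(2*u)) = 1/2 + (-1/(2*u)) by
      field_simp; ring, Real.exp_add]
    field_simp
  -- combine
  have hq0 : 0 ≤ q := by positivity
  have ha0 : 0 ≤ a := by positivity
  have ha1 : a ≤ 1 := by
    rw [ha_def, show (-u/2) = -(u/2) by ring, Real.exp_neg]
    rw [mul_inv_le_iff₀ (Real.exp_pos _), one_mul]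
    exact u_le_exp_half hu0.le
  have hb0 : 0 ≤ b := (Real.exp_pos _).le
  have hb1 : b ≤ 1 := by
    rw [hb_def]
    exact Real.exp_le_one_iff.mpr (div_nonpos_of_nonpos_of_nonneg (by norm_num) (by positivity))
  have habK : a^K + b^K ≤ 1 := by
    have h3a : a^K ≤ a^3 := pow_le_pow_of_le_one ha0 ha1 hK3
    have h3b : b^K ≤ b^3 := pow_le_pow_of_le_one hb0 hb1 hK3
    have ha3 : a^3 = u^3 * Real.exp (-(3*u)/2) := by
      rw [ha_def, mul_pow, ← Real.exp_nat_mul]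
      congr 1
      push_cast
      ring
    have hb3 : b^3 = Real.exp (-3/(2*u)) := by
      rw [hb_def, ← Real.exp_nat_mul]
      congr 1
      push_cast
      ring
    calc a^K + b^K ≤ a^3 + b^3 := add_le_add h3a h3b
      _ = u^3 * Real.exp (-(3*u)/2) + Real.exp (-3/(2*u)) := by rw [ha3, hb3]
      _ ≤ 1 := key_ineq hu.le
  have hunion : (Pr ({ω | ∑ i, (X i ω)^2 ≤ (K:ℝ)*(V:ℝ)/w^2}
        ∪ {ω | (K:ℝ)*(V:ℝ)*w^2 ≤ ∑ i, (X i ω)^2})).toReal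
      ≤ (Pr {ω | ∑ i, (X i ω)^2 ≤ (K:ℝ)*(V:ℝ)/u}).toReal
        + (Pr {ω | (K:ℝ)*(V:ℝ)*u ≤ ∑ i, (X i ω)^2}).toReal := by
    rw [← ENNReal.toReal_add (measure_ne_top _ _) (measure_ne_top _ _)]
    exact ENNReal.toReal_mono
      (ENNReal.add_ne_top.mpr ⟨measure_ne_top _ _, measure_ne_top _ _⟩)
      (measure_union_le _ _)
  calc (Pr _).toReal ≤ _ := hunion
    _ ≤ (q*b)^K + (q*a)^K := by
        rw [← eqlo, ← equp]; exact add_le_add hlo hup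
    _ = q^K * (b^K + a^K) := by rw [mul_pow, mul_pow]; ring
    _ ≤ q^K * 1 := by
        apply mul_le_mul_of_nonneg_left _ (pow_nonneg hq0 _)
        rw [add_comm]; exact habK
    _ = (Real.sqrt (Real.exp 1)/w)^K := by rw [mul_one]

lemma zero_var_case {Ω : Type*} [MeasurableSpace Ω] (Pr : Measure Ω)
    (K : ℕ) (X : Fin K → Ω → ℝ) (hX : ∀ i, Measurable (X i))
    (hlaw : ∀ i, Pr.map (X i) = gaussianReal 0 0) :
    Pr {ω | ∃ i, X i ω ≠ 0} = 0 := by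
  have h : ∀ i, Pr {ω | X i ω ≠ 0} = 0 := by
    intro i
    have h1 : Pr (X i ⁻¹' ({(0:ℝ)}ᶜ)) = (Pr.map (X i)) ({(0:ℝ)}ᶜ) := by
      rw [Measure.map_apply (hX i) (measurableSet_singleton 0).compl]
    have h2 : (Pr.map (X i)) ({(0:ℝ)}ᶜ) = 0 := by
      rw [hlaw i, gaussianReal_zero_var]
      rw [Measure.dirac_apply' _ (measurableSet_singleton 0).compl]
      simp
    have h3 : {ω | X i ω ≠ 0} = X i ⁻¹' ({(0:ℝ)}ᶜ) := rfl
    rw [h3, h1, h2]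
  have hsub : {ω | ∃ i, X i ω ≠ 0} = ⋃ i, {ω | X i ω ≠ 0} := by
    ext ω; simp
  rw [hsub]
  exact measure_iUnion_null (fun i => h i)


/-- Simultaneous norm estimation over a finite set of vectors: if
K ≥ max{(log #M + log(1/δ))/log(w/√e), 3}, then with probability ≥ 1 − δ,
w⁻¹‖v‖_Σ ≤ ‖Φv‖₂ ≤ w‖v‖_Σ for every v in the finite set M simultaneously. -/
theorem stmt4 {Ω : Type*} [MeasurableSpace Ω] (Pr : Measure Ω) [IsProbabilityMeasure Pr]
    (N K : ℕ)
    (S : Matrix (Fin N) (Fin N) ℝ) (hS : S.PosSemidef)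
    (Z : Fin K → Ω → (Fin N → ℝ))
    (hmeas : ∀ i, Measurable (Z i))
    (hindep : iIndepFun Z Pr)
    (hgauss : ∀ i (a : Fin N → ℝ),
      Measure.map (fun ω => Z i ω ⬝ᵥ a) Pr
        = gaussianReal 0 (Real.toNNReal (a ⬝ᵥ S.mulVec a)))
    (M : Finset (Fin N → ℝ)) (hM : M.Nonempty)
    (δ : ℝ) (hδ0 : 0 < δ) (hδ1 : δ < 1)
    (w : ℝ) (hw : Real.sqrt (Real.exp 1) < w)
    (hK : (Real.log (M.card) + Real.log δ⁻¹) / Real.log (w / Real.sqrt (Real.exp 1))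
            ≤ (K : ℝ))
    (hK3 : 3 ≤ K) :
    ENNReal.ofReal (1 - δ) ≤
      Pr {ω | ∀ v ∈ M,
        w⁻¹ * Real.sqrt (v ⬝ᵥ S.mulVec v)
            ≤ Real.sqrt ((1 / (K : ℝ)) * ∑ i, (Z i ω ⬝ᵥ v) ^ 2)
          ∧ Real.sqrt ((1 / (K : ℝ)) * ∑ i, (Z i ω ⬝ᵥ v) ^ 2)
            ≤ w * Real.sqrt (v ⬝ᵥ S.mulVec v)} := by
  classical
  have he1 : (1:ℝ) < Real.exp 1 := by linarith [exp1_lb]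
  have hsw : (1:ℝ) < Real.sqrt (Real.exp 1) := by
    nlinarith [Real.sq_sqrt (Real.exp_pos 1).le, Real.sqrt_nonneg (Real.exp 1)]
  have hse0 : (0:ℝ) < Real.sqrt (Real.exp 1) := by linarith
  have hw1 : 1 < w := lt_trans hsw hw
  have hw0 : (0:ℝ) < w := by linarith
  set q : ℝ := Real.sqrt (Real.exp 1) / w with hq_def
  have hq0 : 0 < q := by positivity
  have hKpos : (0:ℝ) < K := by
    have : (3:ℝ) ≤ K := by exact_mod_cast hK3
    linarith
  have hdotm : ∀ (v : Fin N → ℝ), Measurable (fun z : Fin N → ℝ => z ⬝ᵥ v) := by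
    intro v
    exact Finset.measurable_sum Finset.univ (fun j _ => by fun_prop)
  have hXm : ∀ (v : Fin N → ℝ) (i : Fin K), Measurable (fun ω => Z i ω ⬝ᵥ v) :=
    fun v i => (hdotm v).comp (hmeas i)
  set good : (Fin N → ℝ) → Set Ω := fun v => {ω |
    w⁻¹ * Real.sqrt (v ⬝ᵥ S.mulVec v) ≤ Real.sqrt ((1 / (K : ℝ)) * ∑ i, (Z i ω ⬝ᵥ v) ^ 2)
    ∧ Real.sqrt ((1 / (K : ℝ)) * ∑ i, (Z i ω ⬝ᵥ v) ^ 2)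
      ≤ w * Real.sqrt (v ⬝ᵥ S.mulVec v)} with hgood_def
  have hfmeas : ∀ v : Fin N → ℝ, Measurable (fun ω => ∑ i, (Z i ω ⬝ᵥ v)^2) := fun v =>
    Finset.measurable_sum _ (fun i _ => ((hXm v i).pow_const 2))
  have hgmeas : ∀ v : Fin N → ℝ,
      Measurable (fun ω => Real.sqrt ((1 / (K : ℝ)) * ∑ i, (Z i ω ⬝ᵥ v) ^ 2)) := fun v =>
    Real.continuous_sqrt.measurable.comp (measurable_const.mul (hfmeas v))
  have hgoodmeas : ∀ v, MeasurableSet (good v) := by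
    intro v
    have : good v = {ω | w⁻¹ * Real.sqrt (v ⬝ᵥ S.mulVec v)
          ≤ Real.sqrt ((1 / (K : ℝ)) * ∑ i, (Z i ω ⬝ᵥ v) ^ 2)}
        ∩ {ω | Real.sqrt ((1 / (K : ℝ)) * ∑ i, (Z i ω ⬝ᵥ v) ^ 2)
          ≤ w * Real.sqrt (v ⬝ᵥ S.mulVec v)} := rfl
    rw [this]
    exact (measurableSet_le measurable_const (hgmeas v)).inter
      (measurableSet_le (hgmeas v) measurable_const)
  -- per-v bound
  have key : ∀ v : Fin N → ℝ, Pr ((good v)ᶜ) ≤ ENNReal.ofReal (q ^ K) := by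
    intro v
    have hVr : 0 ≤ v ⬝ᵥ S.mulVec v := by
      have := hS.dotProduct_mulVec_nonneg v
      simpa using this
    have hVco : ((Real.toNNReal (v ⬝ᵥ S.mulVec v)):ℝ) = v ⬝ᵥ S.mulVec v :=
      Real.coe_toNNReal _ hVr
    rcases eq_or_lt_of_le hVr with h0 | hpos
    · -- zero variance
      have hlaw0 : ∀ i, Pr.map (fun ω => Z i ω ⬝ᵥ v) = gaussianReal 0 0 := by
        intro i
        rw [hgauss i v, ← h0]
        norm_num
      have hz := zero_var_case Pr K _ (hXm v) hlaw0
      have hsub0 : (good v)ᶜ ⊆ {ω | ∃ i, Z i ω ⬝ᵥ v ≠ 0} := by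
        intro ω hω
        by_contra hc
        simp only [Set.mem_setOf_eq, not_exists, not_not] at hc
        apply hω
        have hsum : ∑ i, (Z i ω ⬝ᵥ v)^2 = 0 :=
          Finset.sum_eq_zero (fun i _ => by rw [hc i]; ring)
        have : ω ∈ good v := by
          refine ⟨?_, ?_⟩ <;> simp [hsum, ← h0]
        exact this
      calc Pr ((good v)ᶜ) ≤ Pr {ω | ∃ i, Z i ω ⬝ᵥ v ≠ 0} := measure_mono hsub0
        _ = 0 := hz
        _ ≤ ENNReal.ofReal (q ^ K) := zero_le
    · -- positive variance
      set V : ℝ≥0 := Real.toNNReal (v ⬝ᵥ S.mulVec v) with hV_def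
      have hVpos : (0:ℝ) < V := by rw [hVco]; exact hpos
      have hind' : iIndepFun
          (fun i => fun ω => (Z i ω ⬝ᵥ v)^2) Pr :=
        hindep.comp (fun _ => fun z : Fin N → ℝ => (z ⬝ᵥ v)^2)
          (fun _ => (hdotm v).pow_const 2)
      have hlawv : ∀ i, Pr.map (fun ω => Z i ω ⬝ᵥ v) = gaussianReal 0 V := fun i => hgauss i v
      have htail := per_v_tail Pr K hK3 _ (hXm v) hind' V hVpos hlawv w hw
      have hsub : (good v)ᶜ ⊆ {ω | ∑ i, (Z i ω ⬝ᵥ v)^2 ≤ (K:ℝ)*(V:ℝ)/w^2}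
          ∪ {ω | (K:ℝ)*(V:ℝ)*w^2 ≤ ∑ i, (Z i ω ⬝ᵥ v)^2} := by
        intro ω hω
        by_contra hc
        simp only [Set.mem_union, Set.mem_setOf_eq, not_or, not_le] at hc
        obtain ⟨h1, h2⟩ := hc
        apply hω
        have hQ0 : 0 ≤ ∑ i, (Z i ω ⬝ᵥ v)^2 :=
          Finset.sum_nonneg (fun i _ => sq_nonneg _)
        have hmem : ω ∈ good v := by
          constructor
          · have hle : (v ⬝ᵥ S.mulVec v)/w^2 ≤ (1/(K:ℝ)) * ∑ i, (Z i ω ⬝ᵥ v)^2 := by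
              rw [← hVco]
              calc ((V:ℝ))/w^2 = (1/(K:ℝ)) * ((K:ℝ)*(V:ℝ)/w^2) := by field_simp
                _ ≤ (1/(K:ℝ)) * ∑ i, (Z i ω ⬝ᵥ v)^2 :=
                    mul_le_mul_of_nonneg_left h1.le (by positivity)
            calc w⁻¹ * Real.sqrt (v ⬝ᵥ S.mulVec v)
                = Real.sqrt ((v ⬝ᵥ S.mulVec v)/w^2) := by
                  rw [Real.sqrt_div hVr, Real.sqrt_sq hw0.le, div_eq_inv_mul]
              _ ≤ _ := Real.sqrt_le_sqrt hle
          · have hle : (1/(K:ℝ)) * ∑ i, (Z i ω ⬝ᵥ v)^2 ≤ (v ⬝ᵥ S.mulVec v)*w^2 := by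
              rw [← hVco]
              calc (1/(K:ℝ)) * ∑ i, (Z i ω ⬝ᵥ v)^2
                  ≤ (1/(K:ℝ)) * ((K:ℝ)*(V:ℝ)*w^2) :=
                    mul_le_mul_of_nonneg_left h2.le (by positivity)
                _ = ((V:ℝ))*w^2 := by field_simp
            calc Real.sqrt ((1/(K:ℝ)) * ∑ i, (Z i ω ⬝ᵥ v)^2)
                ≤ Real.sqrt ((v ⬝ᵥ S.mulVec v)*w^2) := Real.sqrt_le_sqrt hle
              _ = w * Real.sqrt (v ⬝ᵥ S.mulVec v) := by
                  rw [Real.sqrt_mul hVr, Real.sqrt_sq hw0.le, mul_comm]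
        exact hmem
      calc Pr ((good v)ᶜ)
          ≤ Pr ({ω | ∑ i, (Z i ω ⬝ᵥ v)^2 ≤ (K:ℝ)*(V:ℝ)/w^2}
            ∪ {ω | (K:ℝ)*(V:ℝ)*w^2 ≤ ∑ i, (Z i ω ⬝ᵥ v)^2}) := measure_mono hsub
        _ = ENNReal.ofReal ((Pr ({ω | ∑ i, (Z i ω ⬝ᵥ v)^2 ≤ (K:ℝ)*(V:ℝ)/w^2}
            ∪ {ω | (K:ℝ)*(V:ℝ)*w^2 ≤ ∑ i, (Z i ω ⬝ᵥ v)^2})).toReal) :=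
              (ENNReal.ofReal_toReal (measure_ne_top _ _)).symm
        _ ≤ ENNReal.ofReal (q ^ K) := ENNReal.ofReal_le_ofReal htail
  -- arithmetic
  have harith : (M.card : ℝ) * q ^ K ≤ δ := by
    have hm1 : 1 ≤ (M.card:ℝ) := by exact_mod_cast hM.card_pos
    have hr1 : 1 < w / Real.sqrt (Real.exp 1) := (one_lt_div hse0).mpr hw
    have hlogr : 0 < Real.log (w / Real.sqrt (Real.exp 1)) := Real.log_pos hr1
    have h2 := (div_le_iff₀ hlogr).mp hK
    rw [Real.log_inv] at h2
    have hlogq : Real.log q = - Real.log (w / Real.sqrt (Real.exp 1)) := by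
      rw [hq_def, ← Real.log_inv, inv_div]
    have hlhs : Real.log ((M.card:ℝ) * q^K) ≤ Real.log δ := by
      rw [Real.log_mul (by positivity) (by positivity), Real.log_pow, hlogq]
      linarith
    exact (Real.log_le_log_iff (by positivity) hδ0).mp hlhs
  -- union bound
  have hGc : Pr ((⋂ v ∈ M, good v)ᶜ) ≤ ENNReal.ofReal δ := by
    rw [Set.compl_iInter₂]
    calc Pr (⋃ v ∈ M, (good v)ᶜ) ≤ ∑ v ∈ M, Pr ((good v)ᶜ) :=
          measure_biUnion_finset_le M _
      _ ≤ ∑ _v ∈ M, ENNReal.ofReal (q^K) := Finset.sum_le_sum (fun v _ => key v)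
      _ = (M.card : ℝ≥0∞) * ENNReal.ofReal (q^K) := by
          rw [Finset.sum_const, nsmul_eq_mul]
      _ = ENNReal.ofReal ((M.card:ℝ) * q^K) := by
          rw [ENNReal.ofReal_mul (Nat.cast_nonneg _), ENNReal.ofReal_natCast]
      _ ≤ ENNReal.ofReal δ := ENNReal.ofReal_le_ofReal harith
  have hGmeas : MeasurableSet (⋂ v ∈ M, good v) :=
    MeasurableSet.biInter M.countable_toSet (fun v _ => hgoodmeas v)
  have hGoal : {ω | ∀ v ∈ M,
        w⁻¹ * Real.sqrt (v ⬝ᵥ S.mulVec v)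
            ≤ Real.sqrt ((1 / (K : ℝ)) * ∑ i, (Z i ω ⬝ᵥ v) ^ 2)
          ∧ Real.sqrt ((1 / (K : ℝ)) * ∑ i, (Z i ω ⬝ᵥ v) ^ 2)
            ≤ w * Real.sqrt (v ⬝ᵥ S.mulVec v)} = ⋂ v ∈ M, good v := by
    ext ω
    simp only [Set.mem_setOf_eq, Set.mem_iInter, hgood_def]
  rw [hGoal]
  have h1 : Pr (⋂ v ∈ M, good v) = 1 - Pr ((⋂ v ∈ M, good v)ᶜ) := by
    refine ENNReal.eq_sub_of_add_eq (measure_ne_top _ _) ?_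
    rw [measure_add_measure_compl hGmeas, measure_univ]
  rw [h1]
  have h2 : ENNReal.ofReal (1-δ) + ENNReal.ofReal δ ≤ 1 := by
    rw [← ENNReal.ofReal_add (by linarith) hδ0.le]
    simp
  calc ENNReal.ofReal (1-δ) ≤ 1 - ENNReal.ofReal δ := ENNReal.le_sub_of_add_le_right ENNReal.ofReal_ne_top h2
    _ ≤ 1 - Pr ((⋂ v ∈ M, good v)ᶜ) := tsub_le_tsub_left hGc 1
end

section
/- Let 0 < δ < 1, w > e, and K ≥ max{ (2log(2·#P) + 2log(1/δ)) / log(w/e), 3 }. Define the relative estimator Δ^rel(μ) = √( ∑ᵢ(Zᵢᵀ(u(μ)−ũ(μ)))² / ∑ᵢ(Zᵢᵀu(μ))² ). Then with probability at least 1−δ, w⁻¹Δ^rel(μ) ≤ ‖u(μ)−ũ(μ)‖_Σ/‖u(μ)‖_Σ ≤ wΔ^rel(μ) simultaneously for all μ in the finite set P. -/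
open MeasureTheory ProbabilityTheory Real Matrix
open scoped NNReal ENNReal
set_option maxHeartbeats 1000000

section Stmt8Aux
open Finset

lemma gauss_sq_exp (v : ℝ≥0) (t : ℝ) (ht : 2 * t * (v:ℝ) < 1) :
    Integrable (fun x => rexp (t * x ^ 2)) (gaussianReal 0 v) ∧
    ∫ x, rexp (t * x ^ 2) ∂(gaussianReal 0 v) = (Real.sqrt (1 - 2*t*(v:ℝ)))⁻¹ := by
  rcases eq_or_ne v 0 with hv | hv
  · subst hv
    rw [gaussianReal_zero_var]
    constructor
    · have hae : (fun x : ℝ => rexp (t * x ^ 2)) =ᵐ[Measure.dirac 0] (fun _ => (1:ℝ)) := by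
        rw [MeasureTheory.ae_dirac_eq]
        exact Filter.eventually_pure.mpr (by norm_num)
      exact (integrable_const (1:ℝ)).congr hae.symm
    · rw [integral_dirac]
      norm_num
  · have hv0 : (0:ℝ) < (v:ℝ) := by positivity
    set b : ℝ := (2*(v:ℝ))⁻¹ - t with hb_def
    have hb : 0 < b := by
      rw [hb_def]
      nlinarith [mul_inv_cancel₀ (show (2*(v:ℝ)) ≠ 0 by positivity), hv0]
    have hkey : ∀ x : ℝ, gaussianPDFReal 0 v x * rexp (t * x ^ 2)
        = (Real.sqrt (2*π*v))⁻¹ * rexp (-b * x^2) := by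
      intro x
      rw [gaussianPDFReal]
      rw [mul_assoc, ← Real.exp_add]
      congr 1
      rw [hb_def, sub_zero]
      ring
    rw [gaussianReal_of_var_ne_zero _ hv, gaussianPDF_def]
    have f_meas : Measurable (fun x => (gaussianPDFReal 0 v x).toNNReal) :=
      (measurable_gaussianPDFReal 0 v).real_toNNReal
    have hsmul : ∀ x : ℝ, ((gaussianPDFReal 0 v x).toNNReal : ℝ) • rexp (t * x ^ 2)
        = (Real.sqrt (2*π*v))⁻¹ * rexp (-b * x^2) := by
      intro x
      rw [smul_eq_mul, Real.coe_toNNReal _ (gaussianPDFReal_nonneg 0 v x)]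
      exact hkey x
    have hofReal : (fun x => ENNReal.ofReal (gaussianPDFReal 0 v x))
        = fun x => ((gaussianPDFReal 0 v x).toNNReal : ℝ≥0∞) := rfl
    rw [hofReal]
    constructor
    · rw [integrable_withDensity_iff_integrable_smul f_meas]
      have : (fun x => ((gaussianPDFReal 0 v x).toNNReal) • rexp (t * x ^ 2))
          = fun x => (Real.sqrt (2*π*v))⁻¹ * rexp (-b * x^2) := by
        funext x; rw [NNReal.smul_def]; exact hsmul x
      rw [this]
      exact (integrable_exp_neg_mul_sq hb).const_mul _
    · rw [integral_withDensity_eq_integral_smul f_meas]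
      have : (fun x => ((gaussianPDFReal 0 v x).toNNReal) • rexp (t * x ^ 2))
          = fun x => (Real.sqrt (2*π*v))⁻¹ * rexp (-b * x^2) := by
        funext x; rw [NNReal.smul_def]; exact hsmul x
      rw [this, integral_const_mul, integral_gaussian]
      rw [← Real.sqrt_inv, ← Real.sqrt_mul (by positivity)]
      rw [← Real.sqrt_inv]
      congr 1
      have h2vb : 2*(v:ℝ)*b = 1 - 2*t*(v:ℝ) := by
        rw [hb_def]; field_simp
      have hπ : (0:ℝ) < π := Real.pi_pos
      rw [← h2vb]
      field_simp

lemma sq_exp_integral {Ω : Type*} [MeasurableSpace Ω] (Pr : Measure Ω) (X : Ω → ℝ)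
    (hX : Measurable X) (v : ℝ≥0) (hlaw : Measure.map X Pr = gaussianReal 0 v)
    (t : ℝ) (ht : 2*t*(v:ℝ) < 1) :
    Integrable (fun ω => rexp (t * X ω ^ 2)) Pr ∧
    ∫ ω, rexp (t * X ω ^ 2) ∂Pr = (Real.sqrt (1 - 2*t*(v:ℝ)))⁻¹ := by
  have h1 := gauss_sq_exp v t ht
  rw [← hlaw] at h1
  have hg : AEStronglyMeasurable (fun x : ℝ => rexp (t * x ^ 2)) (Measure.map X Pr) := by
    exact ((measurable_id.pow_const 2).const_mul t).exp.aestronglyMeasurable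
  constructor
  · exact (integrable_map_measure hg hX.aemeasurable).mp h1.1
  · rw [← h1.2, integral_map hX.aemeasurable hg]

lemma tail_bound {Ω : Type*} [MeasurableSpace Ω] (Pr : Measure Ω) [IsProbabilityMeasure Pr]
    {K : ℕ} (X : Fin K → Ω → ℝ) (hXmeas : ∀ i, Measurable (X i))
    (hXindep : iIndepFun X Pr)
    {v : ℝ} (hv : 0 ≤ v) (hlaw : ∀ i, Measure.map (X i) Pr = gaussianReal 0 v.toNNReal)
    {w : ℝ} (hw : 1 < w) :
    Pr {ω | ¬((K:ℝ) * v / w ≤ ∑ i, X i ω ^ 2 ∧ ∑ i, X i ω ^ 2 ≤ (K:ℝ) * w * v)}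
      ≤ ENNReal.ofReal ((Real.sqrt w * rexp ((1-w)/2))^K
          + ((Real.sqrt w)⁻¹ * rexp ((w-1)/(2*w)))^K) := by
  have hvc : ((v.toNNReal : ℝ)) = v := Real.coe_toNNReal _ hv
  have hw0 : (0:ℝ) < w := lt_trans one_pos hw
  rcases eq_or_lt_of_le hv with hv0 | hv0
  · -- degenerate case v = 0
    have hdirac : ∀ i, Measure.map (X i) Pr = Measure.dirac 0 := by
      intro i
      rw [hlaw i, ← hv0]
      simp
    have hnull : ∀ i, Pr {ω | X i ω ≠ 0} = 0 := by
      intro i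
      have hm : MeasurableSet ({(0:ℝ)}ᶜ) := (measurableSet_singleton 0).compl
      have : Pr {ω | X i ω ≠ 0} = Measure.map (X i) Pr {(0:ℝ)}ᶜ := by
        rw [Measure.map_apply (hXmeas i) hm]
        rfl
      rw [this, hdirac i, Measure.dirac_apply' _ hm]
      simp
    have hsub : {ω | ¬((K:ℝ) * v / w ≤ ∑ i, X i ω ^ 2 ∧ ∑ i, X i ω ^ 2 ≤ (K:ℝ) * w * v)}
        ⊆ ⋃ i, {ω | X i ω ≠ 0} := by
      intro ω hω
      by_contra hc
      simp only [Set.mem_iUnion, Set.mem_setOf_eq, not_exists, not_not] at hc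
      apply hω
      have hsum : ∑ i, X i ω ^ 2 = 0 := by
        apply Finset.sum_eq_zero
        intro i _
        rw [hc i]; ring
      rw [hsum, ← hv0]
      norm_num
    refine le_trans (measure_mono hsub) ?_
    rw [measure_iUnion_null hnull]
    exact zero_le
  · -- main case 0 < v
    set Y : Fin K → Ω → ℝ := fun i ω => X i ω ^ 2 with hY_def
    have hYmeas : ∀ i, Measurable (Y i) := fun i => (hXmeas i).pow_const 2
    have hYindep : iIndepFun Y Pr :=
      hXindep.comp (fun _ x => x ^ 2) (fun _ => measurable_id.pow_const 2)
    have key : ∀ t : ℝ, 2*t*v < 1 →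
        Integrable (fun ω => rexp (t * (∑ i, Y i) ω)) Pr ∧
        mgf (∑ i, Y i) Pr t = ((Real.sqrt (1 - 2*t*v))⁻¹)^K := by
      intro t ht
      have ht' : 2*t*((v.toNNReal:ℝ)) < 1 := by rwa [hvc]
      have hint : ∀ i, Integrable (fun ω => rexp (t * Y i ω)) Pr := fun i =>
        (sq_exp_integral Pr (X i) (hXmeas i) _ (hlaw i) t ht').1
      have hmgf : ∀ i, mgf (Y i) Pr t = (Real.sqrt (1 - 2*t*v))⁻¹ := by
        intro i
        have := (sq_exp_integral Pr (X i) (hXmeas i) _ (hlaw i) t ht').2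
        rw [hvc] at this
        exact this
      constructor
      · exact hYindep.integrable_exp_mul_sum hYmeas (fun i _ => hint i)
      · rw [hYindep.mgf_sum hYmeas]
        simp only [hmgf]
        rw [Finset.prod_const, Finset.card_univ, Fintype.card_fin]
    -- upper tail
    have hup : (Pr {ω | (K:ℝ) * w * v ≤ ∑ i, X i ω ^ 2}).toReal
        ≤ (Real.sqrt w * rexp ((1-w)/2))^K := by
      set t : ℝ := (1 - w⁻¹)/(2*v) with ht_def
      have h2tv : 2*t*v = 1 - w⁻¹ := by rw [ht_def]; field_simp
      have ht1 : 2*t*v < 1 := by rw [h2tv]; simp [hw0, inv_pos]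
      have ht0 : 0 ≤ t := by
        rw [ht_def]
        apply div_nonneg _ (by positivity)
        simp only [sub_nonneg]
        exact inv_le_one_of_one_le₀ hw.le
      obtain ⟨hint, hmgf⟩ := key t ht1
      have hset : {ω | (K:ℝ) * w * v ≤ ∑ i, X i ω ^ 2}
          = {ω | (K:ℝ) * w * v ≤ (∑ i, Y i) ω} := by
        ext ω; simp [hY_def, Finset.sum_apply]
      rw [hset]
      refine le_trans (measure_ge_le_exp_mul_mgf ((K:ℝ)*w*v) ht0 hint) ?_
      rw [hmgf, h2tv]
      have h1 : (1 : ℝ) - (1 - w⁻¹) = w⁻¹ := by ring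
      rw [h1, Real.sqrt_inv, inv_inv]
      have h2 : -t * ((K:ℝ)*w*v) = (K:ℝ) * ((1-w)/2) := by
        rw [ht_def]; field_simp; ring
      rw [h2, Real.exp_nat_mul, ← mul_pow]
      rw [mul_comm]
    -- lower tail
    have hlo : (Pr {ω | ∑ i, X i ω ^ 2 ≤ (K:ℝ) * v / w}).toReal
        ≤ ((Real.sqrt w)⁻¹ * rexp ((w-1)/(2*w)))^K := by
      set t : ℝ := (1 - w)/(2*v) with ht_def
      have h2tv : 2*t*v = 1 - w := by rw [ht_def]; field_simp
      have ht1 : 2*t*v < 1 := by rw [h2tv]; linarith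
      have ht0 : t ≤ 0 := by
        rw [ht_def]
        apply div_nonpos_of_nonpos_of_nonneg (by linarith) (by positivity)
      obtain ⟨hint, hmgf⟩ := key t ht1
      have hset : {ω | ∑ i, X i ω ^ 2 ≤ (K:ℝ) * v / w}
          = {ω | (∑ i, Y i) ω ≤ (K:ℝ) * v / w} := by
        ext ω; simp [hY_def, Finset.sum_apply]
      rw [hset]
      refine le_trans (measure_le_le_exp_mul_mgf ((K:ℝ)*v/w) ht0 hint) ?_
      rw [hmgf, h2tv]
      have h1 : (1 : ℝ) - (1 - w) = w := by ring
      rw [h1]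
      have h2 : -t * ((K:ℝ)*v/w) = (K:ℝ) * ((w-1)/(2*w)) := by
        rw [ht_def]; field_simp; ring
      rw [h2, Real.exp_nat_mul, ← mul_pow]
      rw [mul_comm]
    -- combine
    have hsub : {ω | ¬((K:ℝ) * v / w ≤ ∑ i, X i ω ^ 2 ∧ ∑ i, X i ω ^ 2 ≤ (K:ℝ) * w * v)}
        ⊆ {ω | (K:ℝ) * w * v ≤ ∑ i, X i ω ^ 2} ∪ {ω | ∑ i, X i ω ^ 2 ≤ (K:ℝ) * v / w} := by
      intro ω hω
      simp only [Set.mem_setOf_eq, not_and_or, not_le] at hω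
      rcases hω with h | h
      · exact Or.inr (Set.mem_setOf_eq ▸ h.le)
      · exact Or.inl (Set.mem_setOf_eq ▸ h.le)
    refine le_trans (measure_mono hsub) (le_trans (measure_union_le _ _) ?_)
    have hA : Pr {ω | (K:ℝ) * w * v ≤ ∑ i, X i ω ^ 2}
        ≤ ENNReal.ofReal ((Real.sqrt w * rexp ((1-w)/2))^K) := by
      rw [← ENNReal.ofReal_toReal (measure_ne_top Pr _)]
      exact ENNReal.ofReal_le_ofReal hup
    have hB : Pr {ω | ∑ i, X i ω ^ 2 ≤ (K:ℝ) * v / w}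
        ≤ ENNReal.ofReal (((Real.sqrt w)⁻¹ * rexp ((w-1)/(2*w)))^K) := by
      rw [← ENNReal.ofReal_toReal (measure_ne_top Pr _)]
      exact ENNReal.ofReal_le_ofReal hlo
    refine le_trans (add_le_add hA hB) ?_
    rw [← ENNReal.ofReal_add (by positivity) (by positivity)]

-- core numeric inequality
lemma numeric_core {w : ℝ} (hw : Real.exp 1 < w) {K : ℕ} (hK3 : 3 ≤ K) :
    (w * rexp (-(w/2)))^K + (rexp (-(2*w)⁻¹))^K ≤ 1 := by
  set E := Real.exp 1 with hE_def
  have hE1 : (2.7182818283:ℝ) < E := Real.exp_one_gt_d9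
  have hE2 : E < 2.7182818286 := Real.exp_one_lt_d9
  have hEpos : (0:ℝ) < E := by linarith
  have hw0 : (0:ℝ) < w := by linarith
  have hlog : Real.log w ≤ w / E := by
    have h := Real.log_le_sub_one_of_pos (show (0:ℝ) < w / E by positivity)
    rw [Real.log_div (ne_of_gt hw0) (Real.exp_ne_zero 1), Real.log_exp] at h
    linarith
  set a := w * rexp (-(w/2)) with ha_def
  set b := rexp (-(2*w)⁻¹) with hb_def
  have ha0 : 0 ≤ a := by positivity
  have hb0 : 0 ≤ b := by positivity
  have ha1 : a ≤ 1 := by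
    rw [ha_def]
    have h2E : w/E < w/2 := by
      rw [div_lt_div_iff₀ hEpos (by norm_num : (0:ℝ) < 2)]
      nlinarith
    have : Real.log w < w/2 := lt_of_le_of_lt hlog h2E
    have hwlt : w < rexp (w/2) := by
      calc w = rexp (Real.log w) := (Real.exp_log hw0).symm
      _ < rexp (w/2) := Real.exp_lt_exp.mpr this
    rw [Real.exp_neg]
    rw [mul_inv_le_iff₀ (by positivity)]
    linarith
  have hb1 : b ≤ 1 := by
    rw [hb_def]
    rw [Real.exp_le_one_iff]
    simp only [neg_nonpos]
    positivity
  have hpowa : a^K ≤ a^3 := pow_le_pow_of_le_one ha0 ha1 hK3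
  have hpowb : b^K ≤ b^3 := pow_le_pow_of_le_one hb0 hb1 hK3
  -- now K = 3 case
  set s : ℝ := 3/(2*w) with hs_def
  have hs0 : 0 < s := by positivity
  have hs_le : s ≤ 0.552 := by
    rw [hs_def, div_le_iff₀ (by positivity)]
    nlinarith
  have exp_pow : ∀ (x:ℝ) (n:ℕ), rexp x ^ n = rexp (n * x) :=
    fun x n => (Real.exp_nat_mul x n).symm
  have hb3 : b^3 = rexp (-s) := by
    rw [hb_def, exp_pow]
    congr 1
    rw [hs_def]
    push_cast
    field_simp
  -- Taylor bound : exp(-s) ≤ 1 - s + s^2/2 + (2/9) s^3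
  have htaylor : rexp (-s) ≤ 1 - s + s^2/2 + 2/9*s^3 := by
    have habs : |(-s)| ≤ 1 := by rw [abs_neg, abs_of_pos hs0]; linarith
    have h := Real.exp_bound habs (by norm_num : 0 < 3)
    have hsum : ∑ m ∈ Finset.range 3, (-s)^m / m.factorial = 1 - s + s^2/2 := by
      simp [Finset.sum_range_succ]
      ring
    rw [hsum] at h
    have h2 := (abs_le.mp h).2
    rw [abs_neg, abs_of_pos hs0] at h2
    norm_num [Nat.factorial] at h2
    nlinarith [h2]
  -- main:  a^3 ≤ s - s^2/2 - 2/9 s^3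
  have hmain : a^3 ≤ s - s^2/2 - 2/9*s^3 := by
    have ha3 : a^3 = w^3 * rexp (-(3*w)/2) := by
      rw [ha_def, mul_pow, exp_pow]
      congr 2
      push_cast
      ring
    -- upper bound for w^4 exp(-3w/2)
    have hw4 : w^4 * rexp (-(3*w)/2) ≤ 0.929 := by
      have heq : w^4 * rexp (-(3*w)/2) = rexp (Real.log w * 4 + (-(3*w)/2)) := by
        rw [Real.exp_add]
        congr 1
        rw [show Real.log w * 4 = ((4:ℕ):ℝ) * Real.log w by push_cast; ring,
          Real.exp_nat_mul, Real.exp_log hw0]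
      rw [heq]
      have h1 : Real.log w * 4 + (-(3*w)/2) ≤ 4 - 3*E/2 := by
        have hc : (0:ℝ) ≤ 3*E/2 - 4 := by nlinarith
        have h2 : Real.log w * 4 ≤ 4*w/E := by
          rw [le_div_iff₀ hEpos]
          rw [le_div_iff₀ hEpos] at hlog
          nlinarith
        have h3 : 4*w/E + (-(3*w)/2) ≤ 4 - 3*E/2 := by
          rw [div_add' _ _ _ (ne_of_gt hEpos), div_le_iff₀ hEpos]
          nlinarith [mul_nonneg (sub_nonneg.mpr hw.le) hc]
        linarith
      calc rexp (Real.log w * 4 + (-(3*w)/2)) ≤ rexp (4 - 3*E/2) := Real.exp_le_exp.mpr h1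
        _ ≤ (3*E/2 - 3)⁻¹ := by
            have hpos : (0:ℝ) < 3*E/2 - 3 := by nlinarith
            have := Real.add_one_le_exp (-(4 - 3*E/2))
            have hexp_pos : (0:ℝ) < rexp (4 - 3*E/2) := Real.exp_pos _
            rw [Real.exp_neg] at this
            rw [← inv_inv (rexp (4 - 3*E/2))]
            apply inv_anti₀ hpos
            linarith
        _ ≤ 0.929 := by
            rw [inv_eq_one_div, div_le_iff₀ (by nlinarith)]
            nlinarith
    have hLHS : w^3 * rexp (-(3*w)/2) ≤ 0.929 / w := by
      rw [le_div_iff₀ hw0]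
      calc w^3 * rexp (-(3*w)/2) * w = w^4 * rexp (-(3*w)/2) := by ring
        _ ≤ 0.929 := hw4
    have hRHS : 0.984 / w ≤ s - s^2/2 - 2/9*s^3 := by
      have hfac : 0.656 ≤ 1 - s/2 - 2/9*s^2 := by nlinarith
      have : s - s^2/2 - 2/9*s^3 = s * (1 - s/2 - 2/9*s^2) := by ring
      rw [this, hs_def]
      rw [div_le_iff₀ hw0]
      have h656 : 3/(2*w) * 0.656 * w = 0.984 := by field_simp; ring
      nlinarith [mul_le_mul_of_nonneg_left hfac (le_of_lt hs0), hs0]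
    rw [ha3]
    have h929 : (0.929:ℝ)/w ≤ 0.984/w := by gcongr <;> norm_num
    linarith
  calc a^K + b^K ≤ a^3 + b^3 := add_le_add hpowa hpowb
    _ ≤ (s - s^2/2 - 2/9*s^3) + rexp (-s) := by rw [hb3]; exact add_le_add hmain le_rfl
    _ ≤ 1 := by linarith [htaylor]

lemma combine_tails {w : ℝ} (hw : Real.exp 1 < w) {K : ℕ} (hK3 : 3 ≤ K) :
    (Real.sqrt w * rexp ((1-w)/2))^K + ((Real.sqrt w)⁻¹ * rexp ((w-1)/(2*w)))^K
      ≤ (rexp 2⁻¹ * (Real.sqrt w)⁻¹)^K := by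
  have hE1 : (1:ℝ) < Real.exp 1 := by
    have := Real.exp_one_gt_d9; linarith
  have hw0 : (0:ℝ) < w := by linarith
  have hsw0 : (0:ℝ) < Real.sqrt w := Real.sqrt_pos.mpr hw0
  have hsw : Real.sqrt w * Real.sqrt w = w := Real.mul_self_sqrt hw0.le
  set C : ℝ := rexp 2⁻¹ * (Real.sqrt w)⁻¹ with hC_def
  have hinvw : (Real.sqrt w)⁻¹ * w = Real.sqrt w := by
    rw [inv_mul_eq_iff_eq_mul₀ hsw0.ne', hsw]
  have hA : Real.sqrt w * rexp ((1-w)/2) = C * (w * rexp (-(w/2))) := by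
    rw [show (1-w)/2 = 2⁻¹ + (-(w/2)) by ring, Real.exp_add, hC_def]
    rw [show rexp 2⁻¹ * (Real.sqrt w)⁻¹ * (w * rexp (-(w/2)))
        = rexp 2⁻¹ * ((Real.sqrt w)⁻¹ * w) * rexp (-(w/2)) by ring, hinvw]
    ring
  have hB : (Real.sqrt w)⁻¹ * rexp ((w-1)/(2*w)) = C * rexp (-(2*w)⁻¹) := by
    rw [show (w-1)/(2*w) = 2⁻¹ + (-(2*w)⁻¹) by field_simp; ring, Real.exp_add, hC_def]
    ring
  have hC0 : (0:ℝ) ≤ C^K := by positivity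
  clear_value C
  rw [hA, hB, mul_pow C (w * rexp (-(w/2))), mul_pow C (rexp (-(2*w)⁻¹))]
  calc C^K * (w * rexp (-(w/2)))^K + C^K * (rexp (-(2*w)⁻¹))^K
      = C^K * ((w * rexp (-(w/2)))^K + (rexp (-(2*w)⁻¹))^K) := by ring
    _ ≤ C^K * 1 := mul_le_mul_of_nonneg_left (numeric_core hw hK3) hC0
    _ = C^K := mul_one _

lemma budget {w δ : ℝ} (hw : Real.exp 1 < w) (hδ0 : 0 < δ) {p : ℕ} (hp : 1 ≤ p) {K : ℕ}
    (hK : (2 * Real.log (2 * (p : ℝ)) + 2 * Real.log δ⁻¹) / Real.log (w / Real.exp 1) ≤ (K : ℝ)) :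
    (rexp 2⁻¹ * (Real.sqrt w)⁻¹)^K ≤ δ / (2 * (p:ℝ)) := by
  have hE0 : (0:ℝ) < Real.exp 1 := Real.exp_pos 1
  have hw0 : (0:ℝ) < w := lt_trans hE0 hw
  have hp0 : (0:ℝ) < (p:ℝ) := by exact_mod_cast Nat.pos_of_ne_zero (by omega)
  set L : ℝ := Real.log (w / Real.exp 1) with hL_def
  have hL : 0 < L := Real.log_pos (by rw [lt_div_iff₀ hE0]; linarith)
  have hKL : 2 * Real.log (2 * (p:ℝ)) + 2 * Real.log δ⁻¹ ≤ (K:ℝ) * L := by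
    rw [div_le_iff₀ hL] at hK
    linarith
  have hsw : Real.sqrt w = rexp (Real.log w / 2) := by
    have h2 : rexp (Real.log w / 2) ^ 2 = w := by
      rw [← Real.exp_nat_mul]
      push_cast
      rw [show (2:ℝ) * (Real.log w / 2) = Real.log w by ring, Real.exp_log hw0]
    calc Real.sqrt w = Real.sqrt (rexp (Real.log w / 2) ^ 2) := by conv_lhs => rw [← h2]
      _ = rexp (Real.log w / 2) := Real.sqrt_sq (Real.exp_pos _).le
  have hC : rexp 2⁻¹ * (Real.sqrt w)⁻¹ = rexp (-(L/2)) := by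
    rw [hsw, ← Real.exp_neg, ← Real.exp_add]
    congr 1
    rw [hL_def, Real.log_div (ne_of_gt hw0) (Real.exp_ne_zero 1), Real.log_exp]
    ring
  rw [hC, ← Real.exp_nat_mul]
  have hlog2p : Real.log (2 * (p:ℝ) / δ) = Real.log (2 * (p:ℝ)) + Real.log δ⁻¹ := by
    rw [div_eq_mul_inv, Real.log_mul (by positivity) (by positivity)]
  have harg : (K:ℝ) * (-(L/2)) ≤ -Real.log (2 * (p:ℝ) / δ) := by
    rw [hlog2p]
    nlinarith [hKL]
  calc rexp ((K:ℝ) * (-(L/2))) ≤ rexp (-Real.log (2 * (p:ℝ) / δ)) := Real.exp_le_exp.mpr harg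
    _ = δ / (2 * (p:ℝ)) := by
        rw [Real.exp_neg, Real.exp_log (by positivity)]
        rw [inv_div]

lemma det_ratio {w c S1 S2 v1 v2 : ℝ} (hw : 1 < w) (hc : 0 < c) (hv1 : 0 ≤ v1) (hv2 : 0 < v2)
    (h1 : c*v1/w ≤ S1) (h2 : S1 ≤ c*w*v1) (h3 : c*v2/w ≤ S2) (h4 : S2 ≤ c*w*v2) :
    w⁻¹ * Real.sqrt (S1/S2) ≤ Real.sqrt v1 / Real.sqrt v2
      ∧ Real.sqrt v1 / Real.sqrt v2 ≤ w * Real.sqrt (S1/S2) := by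
  have hw0 : (0:ℝ) < w := lt_trans one_pos hw
  have hS2 : (0:ℝ) < S2 := lt_of_lt_of_le (by positivity) h3
  have hS1 : (0:ℝ) ≤ S1 := le_trans (by positivity) h1
  have hsq : Real.sqrt v1 / Real.sqrt v2 = Real.sqrt (v1/v2) := (Real.sqrt_div hv1 v2).symm
  constructor
  · have hr : S1/S2 ≤ w^2*(v1/v2) := by
      have hdiv : S1/S2 ≤ (c*w*v1)/(c*v2/w) := div_le_div₀ (by positivity) h2 (by positivity) h3
      have heq : (c*w*v1)/(c*v2/w) = w^2*(v1/v2) := by field_simp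
      rw [heq] at hdiv
      exact hdiv
    have := Real.sqrt_le_sqrt hr
    rw [Real.sqrt_mul (by positivity) (v1/v2), Real.sqrt_sq hw0.le] at this
    rw [hsq]
    calc w⁻¹ * Real.sqrt (S1/S2) ≤ w⁻¹ * (w * Real.sqrt (v1/v2)) := by
          exact mul_le_mul_of_nonneg_left this (by positivity)
      _ = Real.sqrt (v1/v2) := by field_simp
  · have hr : v1/v2 ≤ w^2*(S1/S2) := by
      have hdiv : (c*v1/w)/(c*w*v2) ≤ S1/S2 := div_le_div₀ hS1 h1 hS2 h4
      have heq : w^2 * ((c*v1/w)/(c*w*v2)) = v1/v2 := by field_simp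
      rw [← heq]
      exact mul_le_mul_of_nonneg_left hdiv (by positivity)
    have := Real.sqrt_le_sqrt hr
    rw [Real.sqrt_mul (by positivity) (S1/S2), Real.sqrt_sq hw0.le] at this
    rw [hsq]
    exact this

end Stmt8Aux

/-- Relative randomized error estimator: with Z₁,…,Z_K iid N(0,Σ),
Δʳᵉˡ(μ) = √(∑ᵢ(Zᵢᵀ(u(μ)−ũ(μ)))² / ∑ᵢ(Zᵢᵀu(μ))²), if w > e and
K ≥ max{(2log(2#P) + 2log(1/δ))/log(w/e), 3}, then with probability ≥ 1 − δ,
w⁻¹Δʳᵉˡ(μ) ≤ ‖u(μ)−ũ(μ)‖_Σ/‖u(μ)‖_Σ ≤ wΔʳᵉˡ(μ) for all μ ∈ P. -/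
theorem stmt8 {Ω : Type*} [MeasurableSpace Ω] (Pr : Measure Ω) [IsProbabilityMeasure Pr]
    (N K : ℕ)
    (S : Matrix (Fin N) (Fin N) ℝ) (hS : S.PosSemidef)
    (Z : Fin K → Ω → (Fin N → ℝ))
    (hmeas : ∀ i, Measurable (Z i))
    (hindep : iIndepFun Z Pr)
    (hgauss : ∀ i (a : Fin N → ℝ),
      Measure.map (fun ω => Z i ω ⬝ᵥ a) Pr
        = gaussianReal 0 (Real.toNNReal (a ⬝ᵥ S.mulVec a)))
    (P : Type*) [Fintype P] [Nonempty P]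
    (u ut : P → (Fin N → ℝ))
    (hu : ∀ μ, 0 < Real.sqrt (u μ ⬝ᵥ S.mulVec (u μ)))
    (δ : ℝ) (hδ0 : 0 < δ) (hδ1 : δ < 1)
    (w : ℝ) (hw : Real.exp 1 < w)
    (hK : (2 * Real.log (2 * (Fintype.card P : ℝ)) + 2 * Real.log δ⁻¹)
            / Real.log (w / Real.exp 1) ≤ (K : ℝ))
    (hK3 : 3 ≤ K)
    (Δrel : P → Ω → ℝ)
    (hΔrel : ∀ μ ω, Δrel μ ω =
      Real.sqrt ((∑ i, (Z i ω ⬝ᵥ (u μ - ut μ)) ^ 2) / (∑ i, (Z i ω ⬝ᵥ u μ) ^ 2))) :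
    ENNReal.ofReal (1 - δ) ≤
      Pr {ω | ∀ μ : P,
        w⁻¹ * Δrel μ ω ≤
          Real.sqrt ((u μ - ut μ) ⬝ᵥ S.mulVec (u μ - ut μ))
            / Real.sqrt (u μ ⬝ᵥ S.mulVec (u μ))
        ∧ Real.sqrt ((u μ - ut μ) ⬝ᵥ S.mulVec (u μ - ut μ))
            / Real.sqrt (u μ ⬝ᵥ S.mulVec (u μ)) ≤ w * Δrel μ ω} := by
  classical
  have hE1 : (1:ℝ) < Real.exp 1 := by
    have := Real.exp_one_gt_d9; linarith
  have hw1 : (1:ℝ) < w := lt_trans hE1 hw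
  have hw0 : (0:ℝ) < w := lt_trans one_pos hw1
  set p : ℕ := Fintype.card P with hp_def
  have hp : 1 ≤ p := Fintype.card_pos
  have hp0 : (0:ℝ) < (p:ℝ) := by exact_mod_cast hp
  -- measurability of linear functionals of Z
  have hXmeas : ∀ (a : Fin N → ℝ) (i : Fin K), Measurable (fun ω => Z i ω ⬝ᵥ a) := by
    intro a i
    exact Finset.measurable_sum _ fun j _ => ((measurable_pi_apply j).comp (hmeas i)).mul_const _
  have hXindep : ∀ (a : Fin N → ℝ),
      iIndepFun (fun i (ω : Ω) => Z i ω ⬝ᵥ a) Pr := by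
    intro a
    exact hindep.comp (fun _ z => z ⬝ᵥ a)
      (fun _ => Finset.measurable_sum _ fun j _ => (measurable_pi_apply j).mul_const _)
  have hv : ∀ a : Fin N → ℝ, 0 ≤ a ⬝ᵥ S.mulVec a := by
    intro a
    have := hS.dotProduct_mulVec_nonneg a
    simpa using this
  -- sums are measurable
  have hsum_meas : ∀ a : Fin N → ℝ, Measurable (fun ω => ∑ i, (Z i ω ⬝ᵥ a)^2) :=
    fun a => Finset.measurable_sum _ fun i _ => (hXmeas a i).pow_const 2
  -- per-vector tail bound
  have htail : ∀ a : Fin N → ℝ,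
      Pr {ω | ¬((K:ℝ) * (a ⬝ᵥ S.mulVec a) / w ≤ ∑ i, (Z i ω ⬝ᵥ a)^2
          ∧ ∑ i, (Z i ω ⬝ᵥ a)^2 ≤ (K:ℝ) * w * (a ⬝ᵥ S.mulVec a))}
        ≤ ENNReal.ofReal (δ / (2*(p:ℝ))) := by
    intro a
    refine le_trans
      (tail_bound Pr _ (hXmeas a) (hXindep a) (hv a) (fun i => hgauss i a) hw1)
      (ENNReal.ofReal_le_ofReal ?_)
    exact le_trans (combine_tails hw hK3) (budget hw hδ0 hp hK)
  -- bad events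
  set Bad : P → Set Ω := fun μ =>
    {ω | ¬((K:ℝ) * ((u μ - ut μ) ⬝ᵥ S.mulVec (u μ - ut μ)) / w
          ≤ ∑ i, (Z i ω ⬝ᵥ (u μ - ut μ))^2
        ∧ ∑ i, (Z i ω ⬝ᵥ (u μ - ut μ))^2
          ≤ (K:ℝ) * w * ((u μ - ut μ) ⬝ᵥ S.mulVec (u μ - ut μ)))}
    ∪ {ω | ¬((K:ℝ) * (u μ ⬝ᵥ S.mulVec (u μ)) / w ≤ ∑ i, (Z i ω ⬝ᵥ u μ)^2
        ∧ ∑ i, (Z i ω ⬝ᵥ u μ)^2 ≤ (K:ℝ) * w * (u μ ⬝ᵥ S.mulVec (u μ)))} with hBad_def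
  have hBadmeas : ∀ μ, MeasurableSet (Bad μ) := by
    intro μ
    apply MeasurableSet.union
    all_goals
      rw [show ∀ (q : Ω → Prop), {ω | ¬ q ω} = {ω | q ω}ᶜ from fun q => rfl]
      apply MeasurableSet.compl
      rw [Set.setOf_and]
      exact (measurableSet_le measurable_const (hsum_meas _)).inter
        (measurableSet_le (hsum_meas _) measurable_const)
  have hPrBad : ∀ μ, Pr (Bad μ) ≤ ENNReal.ofReal (δ / (p:ℝ)) := by
    intro μ
    refine le_trans (measure_union_le _ _) (le_trans (add_le_add (htail _) (htail _)) ?_)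
    rw [← ENNReal.ofReal_add (by positivity) (by positivity)]
    apply ENNReal.ofReal_le_ofReal
    rw [← add_div]
    apply le_of_eq
    field_simp
    ring
  have hTotal : Pr (⋃ μ, Bad μ) ≤ ENNReal.ofReal δ := by
    refine le_trans (measure_iUnion_fintype_le Pr Bad) ?_
    calc ∑ μ : P, Pr (Bad μ) ≤ ∑ _μ : P, ENNReal.ofReal (δ / (p:ℝ)) :=
          Finset.sum_le_sum fun μ _ => hPrBad μ
      _ = (p : ℝ≥0∞) * ENNReal.ofReal (δ / (p:ℝ)) := by
          rw [Finset.sum_const, Finset.card_univ, ← hp_def, nsmul_eq_mul]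
      _ = ENNReal.ofReal ((p:ℝ) * (δ / (p:ℝ))) := by
          rw [ENNReal.ofReal_mul (by positivity), ENNReal.ofReal_natCast]
      _ = ENNReal.ofReal δ := by
          congr 1
          field_simp
  have hUnion_meas : MeasurableSet (⋃ μ, Bad μ) := MeasurableSet.iUnion fun μ => hBadmeas μ
  have hsubset : (⋃ μ, Bad μ)ᶜ ⊆ {ω | ∀ μ : P,
        w⁻¹ * Δrel μ ω ≤
          Real.sqrt ((u μ - ut μ) ⬝ᵥ S.mulVec (u μ - ut μ))
            / Real.sqrt (u μ ⬝ᵥ S.mulVec (u μ))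
        ∧ Real.sqrt ((u μ - ut μ) ⬝ᵥ S.mulVec (u μ - ut μ))
            / Real.sqrt (u μ ⬝ᵥ S.mulVec (u μ)) ≤ w * Δrel μ ω} := by
    intro ω hω μ
    simp only [Set.mem_compl_iff, Set.mem_iUnion, not_exists] at hω
    have h := hω μ
    rw [hBad_def] at h
    simp only [Set.mem_union, Set.mem_setOf_eq, not_or, not_not] at h
    obtain ⟨⟨h1, h2⟩, ⟨h3, h4⟩⟩ := h
    have hKpos : (0:ℝ) < (K:ℝ) := by
      have : (0:ℕ) < K := by omega
      exact_mod_cast this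
    have hv2 : 0 < u μ ⬝ᵥ S.mulVec (u μ) := Real.sqrt_pos.mp (hu μ)
    have := det_ratio hw1 hKpos (hv (u μ - ut μ)) hv2 h1 h2 h3 h4
    rw [hΔrel μ ω]
    exact this
  calc ENNReal.ofReal (1 - δ) = 1 - ENNReal.ofReal δ := by
        rw [ENNReal.ofReal_sub _ hδ0.le, ENNReal.ofReal_one]
    _ ≤ 1 - Pr (⋃ μ, Bad μ) := tsub_le_tsub_left hTotal 1
    _ = Pr ((⋃ μ, Bad μ)ᶜ) := (prob_compl_eq_one_sub hUnion_meas).symm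
    _ ≤ _ := measure_mono hsubset
end
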